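/- arXiv:2112.04205 — 2 statements merged into one kernel-verified Lean document; each statement's English description precedes it below -/
import Mathlib

section
/- Let Γ be an M-metrised graph, let f : M → N be a homomorphism of sharp integral commutative monoids, and let Γ' be the edge contraction of Γ along f. Then dgon(Γ') ≤ dgon(Γ). -/
noncomputable section
open scoped Classical

/-! ### Groupification of a cancellative additive commutative monoid -/

variable (M : Type) [AddCancelCommMonoid M]

def gpSetoid : Setoid (M × M) where
  r p q := p.1 + q.2 = q.1 + p.2
  iseqv := by
    refine ⟨fun p => rfl, fun h => h.symm, fun {p q r} h1 h2 => ?_⟩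
    have key : (p.1 + r.2) + (q.1 + q.2) = (r.1 + p.2) + (q.1 + q.2) := by
      calc (p.1 + r.2) + (q.1 + q.2) = (p.1 + q.2) + (q.1 + r.2) := by abel
        _ = (q.1 + p.2) + (r.1 + q.2) := by rw [h1, h2]
        _ = (r.1 + p.2) + (q.1 + q.2) := by abel
    exact add_right_cancel key

/-- The groupification `M^gp` of a cancellative commutative monoid `M`:
the quotient of `M × M` by `(a,b) ~ (c,d) ↔ a + d = c + b` (think of `(a,b)` as `a - b`). -/
def Gp : Type := Quotient (gpSetoid M)

namespace Gp

variable {M}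

/-- The element `a - b` of `M^gp`. -/
def mk (a b : M) : Gp M := Quotient.mk (gpSetoid M) (a, b)

instance : Zero (Gp M) := ⟨mk 0 0⟩

instance : Add (Gp M) :=
  ⟨Quotient.map₂ (fun p q => (p.1 + q.1, p.2 + q.2)) (by
    intro p p' hp q q' hq
    show (p.1 + q.1) + (p'.2 + q'.2) = (p'.1 + q'.1) + (p.2 + q.2)
    calc (p.1 + q.1) + (p'.2 + q'.2) = (p.1 + p'.2) + (q.1 + q'.2) := by abel
      _ = (p'.1 + p.2) + (q'.1 + q.2) := by rw [hp, hq]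
      _ = (p'.1 + q'.1) + (p.2 + q.2) := by abel)⟩

instance : Neg (Gp M) :=
  ⟨Quotient.map (fun p => (p.2, p.1)) (by
    intro p p' hp
    show p.2 + p'.1 = p'.2 + p.1
    calc p.2 + p'.1 = p'.1 + p.2 := by abel
      _ = p.1 + p'.2 := hp.symm
      _ = p'.2 + p.1 := by abel)⟩

lemma mk_add_mk (a b c d : M) : mk a b + mk c d = mk (a + c) (b + d) := rfl
lemma neg_mk (a b : M) : -(mk a b) = mk b a := rfl
lemma zero_def : (0 : Gp M) = mk 0 0 := rfl

instance : AddCommGroup (Gp M) where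
  add := (· + ·)
  zero := 0
  neg := Neg.neg
  nsmul := nsmulRec
  zsmul := zsmulRec
  add_assoc := by
    intro a b c
    induction a using Quotient.inductionOn with | h a =>
    induction b using Quotient.inductionOn with | h b =>
    induction c using Quotient.inductionOn with | h c =>
    exact Quotient.sound (by
      show ((a.1 + b.1) + c.1) + (a.2 + (b.2 + c.2)) = (a.1 + (b.1 + c.1)) + ((a.2 + b.2) + c.2)
      abel)
  zero_add := by
    intro a
    induction a using Quotient.inductionOn with | h a =>
    exact Quotient.sound (by
      show (0 + a.1) + a.2 = a.1 + (0 + a.2)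
      abel)
  add_zero := by
    intro a
    induction a using Quotient.inductionOn with | h a =>
    exact Quotient.sound (by
      show (a.1 + 0) + a.2 = a.1 + (a.2 + 0)
      abel)
  neg_add_cancel := by
    intro a
    induction a using Quotient.inductionOn with | h a =>
    exact Quotient.sound (by
      show (a.2 + a.1) + 0 = 0 + (a.1 + a.2)
      abel)
  add_comm := by
    intro a b
    induction a using Quotient.inductionOn with | h a =>
    induction b using Quotient.inductionOn with | h b =>
    exact Quotient.sound (by
      show (a.1 + b.1) + (b.2 + a.2) = (b.1 + a.1) + (a.2 + b.2)
      abel)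

/-- The canonical map `M → M^gp`. -/
def of : M →+ Gp M where
  toFun a := mk a 0
  map_zero' := rfl
  map_add' := by
    intro a b
    exact (Quotient.sound (by
      show (a + b) + (0 + 0) = (a + b) + 0
      abel) : mk (a + b) 0 = mk (a + b) (0 + 0))

/-- Functoriality of groupification: a monoid homomorphism `f : M →+ N` induces
`f^gp : M^gp →+ N^gp`. -/
def map {N : Type} [AddCancelCommMonoid N] (f : M →+ N) : Gp M →+ Gp N where
  toFun := Quotient.map (fun p => (f p.1, f p.2)) (by
    intro p p' hp
    show f p.1 + f p'.2 = f p'.1 + f p.2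
    rw [← f.map_add, ← f.map_add, hp])
  map_zero' := by
    show mk (f 0) (f 0) = mk 0 0
    rw [f.map_zero]
  map_add' := by
    intro a b
    induction a using Quotient.inductionOn with | h a =>
    induction b using Quotient.inductionOn with | h b =>
    show mk (f (a.1 + b.1)) (f (a.2 + b.2)) = mk (f a.1 + f b.1) (f a.2 + f b.2)
    rw [f.map_add, f.map_add]

end Gp

/-- Sharpness: the only invertible element of `M` is `0`. -/
def Sharp : Prop := ∀ a b : M, a + b = 0 → a = 0

/-! ### Monoid-metrised graphs -/

/-- A graph (Definition 2.3 of the paper) together with a metric taking values in the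
monoid `M`: `X` is the finite set of vertices and half-edges, `r` sends an element to its
root vertex, `i` is the pairing involution on half-edges, and `l` assigns a length in `M`
to every half-edge (and `0` to every vertex). -/
structure MGraph where
  X : Type
  [finX : Fintype X]
  r : X → X
  i : X → X
  r_idem : ∀ x, r (r x) = r x
  i_invol : ∀ x, i (i x) = x
  fix_iff : ∀ x, i x = x ↔ r x = x
  l : X → M
  l_i : ∀ x, l (i x) = l x
  l_zero_iff : ∀ x, l x = 0 ↔ i x = x

attribute [instance] MGraph.finX

namespace MGraph

variable {M} (G : MGraph M)

/-- `x` is a vertex iff it is fixed by the involution. -/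
def IsVertex (x : G.X) : Prop := G.i x = x

/-- `x` is a half-edge iff it is not fixed by the involution. -/
def IsHalfEdge (x : G.X) : Prop := G.i x ≠ x

/-- The vertex set of `G`. -/
abbrev V : Type := { x : G.X // G.IsVertex x }

/-- The root of any element of `X` is a vertex. -/
def rv (x : G.X) : G.V := ⟨G.r x, (G.fix_iff (G.r x)).mpr (G.r_idem x)⟩

/-- Two vertices are adjacent if some edge joins them. -/
def Adj (u v : G.V) : Prop := ∃ x, G.IsHalfEdge x ∧ G.rv x = u ∧ G.rv (G.i x) = v

/-- `G` is connected. (All graphs in the paper are assumed connected.) -/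
def IsConnected : Prop := Nonempty G.X ∧ ∀ u v : G.V, Relation.ReflTransGen G.Adj u v

/-- The degree of a divisor `D : V → ℤ`. -/
def degD (D : G.V → ℤ) : ℤ := ∑ v, D v

/-- A divisor is effective if all its coefficients are nonnegative. -/
def Effective (D : G.V → ℤ) : Prop := ∀ v, 0 ≤ D v

/-- `g : V → M^gp` is piecewise linear if, along every half-edge, the difference of the
values of `g` at the two endpoints is an integer multiple of the length of that edge. -/
def IsPL (g : G.V → Gp M) : Prop :=
  ∀ x, G.IsHalfEdge x → ∃ n : ℤ, g (G.rv x) - g (G.rv (G.i x)) = n • Gp.of (G.l x)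

/-- The (outgoing) integer slope of `g` along the half-edge `x`. -/
def slope (g : G.V → Gp M) (x : G.X) : ℤ :=
  if h : ∃ n : ℤ, g (G.rv x) - g (G.rv (G.i x)) = n • Gp.of (G.l x) then h.choose else 0

/-- The Laplacian of a piecewise linear function. -/
def lap (g : G.V → Gp M) : G.V → ℤ :=
  fun v => ∑ x : G.X, if G.IsHalfEdge x ∧ G.r x = v.val then G.slope g x else 0

/-- Principal divisors: those of the form `Δ(g)` for a piecewise linear `g`. -/
def IsPrincipal (D : G.V → ℤ) : Prop := ∃ g, G.IsPL g ∧ G.lap g = D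

/-- The rank of a divisor `D`:
`r(D) = max { k : for every effective divisor F of degree k, |D - F| ≠ ∅ }`. -/
def rank (D : G.V → ℤ) : ℤ :=
  sSup {k : ℤ | ∀ F : G.V → ℤ, G.Effective F → G.degD F = k →
    ∃ E : G.V → ℤ, G.Effective E ∧ G.IsPrincipal (D - F - E)}

/-- The divisorial gonality: the minimal degree of a divisor of rank at least 1. -/
def dgon : ℤ := sInf {d : ℤ | ∃ D : G.V → ℤ, 1 ≤ G.rank D ∧ G.degD D = d}

end MGraph


/-! ### Edge contractions along a monoid homomorphism -/

namespace MGraph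

variable {M : Type} [AddCancelCommMonoid M] {N : Type} [AddCancelCommMonoid N]

/-- `c : Γ → Γ'` realises the `N`-metrised graph `Γ'` as the edge contraction of the
`M`-metrised graph `Γ` along the monoid homomorphism `f : M → N`: all edge lengths are
replaced by their images under `f`, and the edges whose length becomes `0` are contracted
(their endpoints being identified). -/
structure IsEdgeContraction (f : M →+ N) (G : MGraph M) (G' : MGraph N)
    (c : G.X → G'.X) : Prop where
  /-- Every vertex and half-edge of `Γ'` comes from `Γ`. -/
  surj : Function.Surjective c
  /-- `c` commutes with the root maps. -/
  map_r : ∀ x, c (G.r x) = G'.r (c x)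
  /-- `c` commutes with the involutions. -/
  map_i : ∀ x, c (G.i x) = G'.i (c x)
  /-- The length of the image of `x` is `f` of the length of `x`. -/
  map_l : ∀ x, G'.l (c x) = f (G.l x)
  /-- `c x` is a vertex exactly when `x` is a vertex or a contracted half-edge. -/
  vertex_iff : ∀ x, G'.IsVertex (c x) ↔ (G.IsVertex x ∨ f (G.l x) = 0)
  /-- `c` is injective on the non-contracted half-edges. -/
  inj_halfedges : ∀ x y, G'.IsHalfEdge (c x) → c x = c y → x = y
  /-- Two vertices of `Γ` become equal in `Γ'` exactly when they are joined by a chain of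
  contracted edges. -/
  vertex_glue : ∀ u v, G.IsVertex u → G.IsVertex v →
    (c u = c v ↔ Relation.ReflTransGen
      (fun a b => ∃ x, G.IsHalfEdge x ∧ f (G.l x) = 0 ∧ G.r x = a ∧ G.r (G.i x) = b) u v)

namespace IsEdgeContraction

variable {f : M →+ N} {G : MGraph M} {G' : MGraph N} {c : G.X → G'.X}

/-- The induced map on vertices. -/
def cV (hc : IsEdgeContraction f G G' c) : G.V → G'.V :=
  fun v => ⟨c v.val, by
    show G'.i (c v.val) = c v.val
    conv_lhs => rw [← hc.map_i v.val, v.property]⟩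

/-- The pushforward of divisors along the edge contraction:
`f_*(D) = ∑_v D(v) · [c(v)]`. -/
def push (hc : IsEdgeContraction f G G' c) (D : G.V → ℤ) : G'.V → ℤ :=
  fun v' => ∑ v : G.V, if hc.cV v = v' then D v else 0

end IsEdgeContraction

end MGraph

/-! ### Auxiliary lemmas for Corollary 4.6 -/

section Aux

namespace Gp

variable {M : Type} [AddCancelCommMonoid M]

lemma mk_eq_mk' {a b c d : M} : (Gp.mk a b = Gp.mk c d) ↔ a + d = c + b :=
  ⟨fun h => Quotient.exact h, fun h => Quotient.sound h⟩

lemma of_apply (a : M) : Gp.of a = Gp.mk a 0 := rfl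

lemma nsmul_of (n : ℕ) (a : M) : n • Gp.of a = Gp.of (n • a) :=
  (Gp.of.map_nsmul n a).symm

lemma eq_of_zsmul_of_eq (hM : Sharp M) {a : M} (ha : a ≠ 0) {n m : ℤ}
    (h : n • Gp.of a = m • Gp.of a) : n = m := by
  by_contra hnm
  have hk0 : n - m ≠ 0 := sub_ne_zero.mpr hnm
  have h1 : (n - m) • Gp.of a = 0 := by rw [sub_smul, h, sub_self]
  set k : ℤ := n - m
  have h2 : (k.natAbs : ℤ) • Gp.of a = 0 := by
    rcases le_or_gt 0 k with hk' | hk'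
    · have he : (k.natAbs : ℤ) = k := by omega
      rw [he, h1]
    · have he : (k.natAbs : ℤ) = -k := by omega
      rw [he, neg_smul, h1, neg_zero]
  rw [natCast_zsmul, nsmul_of, of_apply, Gp.zero_def, mk_eq_mk'] at h2
  have h3 : k.natAbs • a = 0 := by simpa using h2
  obtain ⟨j, hj⟩ := Nat.exists_eq_succ_of_ne_zero (Int.natAbs_ne_zero.mpr hk0)
  rw [hj, succ_nsmul] at h3
  exact ha (hM a (j • a) (by rwa [add_comm] at h3))

lemma map_of {N : Type} [AddCancelCommMonoid N] (f : M →+ N) (a : M) :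
    Gp.map f (Gp.of a) = Gp.of (f a) := by
  show Gp.mk (f a) (f 0) = Gp.mk (f a) 0
  rw [f.map_zero]

end Gp

lemma sum_invol_zero {α : Type} [Fintype α] (j : α → α) (hj : ∀ x, j (j x) = x)
    (F : α → ℤ) (hF : ∀ x, F (j x) = - F x) : ∑ x, F x = 0 := by
  apply Finset.sum_involution (fun a _ => j a)
  · intro a _
    rw [hF]
    exact add_neg_cancel _
  · intro a _ ha h
    apply ha
    have h2 := hF a
    rw [h] at h2
    omega
  · intro a _
    exact Finset.mem_univ _
  · intro a _
    exact hj a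

namespace MGraph

variable {M : Type} [AddCancelCommMonoid M] (G : MGraph M)

lemma isVertex_rv (x : G.X) : G.IsVertex (G.r x) := (G.fix_iff _).mpr (G.r_idem x)

lemma isHalfEdge_i {x : G.X} (hx : G.IsHalfEdge x) : G.IsHalfEdge (G.i x) := by
  unfold IsHalfEdge at *
  rw [G.i_invol]
  exact fun h => hx h.symm

lemma l_ne_zero {x : G.X} (hx : G.IsHalfEdge x) : G.l x ≠ 0 :=
  fun h => hx ((G.l_zero_iff x).mp h)

lemma slope_eq' (hM : Sharp M) {g : G.V → Gp M} {x : G.X} (hx : G.IsHalfEdge x) {n : ℤ}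
    (h : g (G.rv x) - g (G.rv (G.i x)) = n • Gp.of (G.l x)) : G.slope g x = n := by
  have hex : ∃ m : ℤ, g (G.rv x) - g (G.rv (G.i x)) = m • Gp.of (G.l x) := ⟨n, h⟩
  rw [MGraph.slope, dif_pos hex]
  exact Gp.eq_of_zsmul_of_eq hM (G.l_ne_zero hx) (hex.choose_spec.symm.trans h)

lemma slope_i' (hM : Sharp M) {g : G.V → Gp M} (hg : G.IsPL g) {x : G.X}
    (hx : G.IsHalfEdge x) : G.slope g (G.i x) = - G.slope g x := by
  obtain ⟨n, hn⟩ := hg x hx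
  rw [G.slope_eq' hM hx hn]
  apply G.slope_eq' hM (G.isHalfEdge_i hx)
  rw [G.i_invol, G.l_i, neg_smul, ← hn, neg_sub]

lemma degD_sub (D E : G.V → ℤ) : G.degD (D - E) = G.degD D - G.degD E := by
  unfold degD
  rw [← Finset.sum_sub_distrib]
  rfl

lemma degD_add (D E : G.V → ℤ) : G.degD (D + E) = G.degD D + G.degD E := by
  unfold degD
  rw [← Finset.sum_add_distrib]
  rfl

lemma degD_nonneg {E : G.V → ℤ} (hE : G.Effective E) : 0 ≤ G.degD E :=
  Finset.sum_nonneg fun v _ => hE v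

lemma degD_lap (hM : Sharp M) {g : G.V → Gp M} (hg : G.IsPL g) :
    G.degD (G.lap g) = 0 := by
  unfold degD lap
  rw [Finset.sum_comm]
  have step : ∀ x : G.X,
      (∑ v : G.V, if G.IsHalfEdge x ∧ G.r x = v.val then G.slope g x else 0)
        = if G.IsHalfEdge x then G.slope g x else 0 := by
    intro x
    by_cases hx : G.IsHalfEdge x
    · rw [if_pos hx]
      have h1 : ∀ v : G.V, (if G.IsHalfEdge x ∧ G.r x = v.val then G.slope g x else 0)
          = if v = G.rv x then G.slope g x else 0 := by
        intro v
        by_cases hv : v = G.rv x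
        · subst hv
          rw [if_pos ⟨hx, rfl⟩, if_pos rfl]
        · rw [if_neg, if_neg hv]
          rintro ⟨-, h2⟩
          exact hv (Subtype.ext h2.symm)
      rw [Finset.sum_congr rfl (fun v _ => h1 v),
        Finset.sum_ite_eq' Finset.univ (G.rv x) (fun _ => G.slope g x)]
      simp
    · simp [hx]
  rw [Finset.sum_congr rfl (fun x _ => step x)]
  apply sum_invol_zero G.i G.i_invol
  intro x
  by_cases hx : G.IsHalfEdge x
  · rw [if_pos (G.isHalfEdge_i hx), if_pos hx, G.slope_i' hM hg hx]
  · have hx' : G.i x = x := not_not.mp hx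
    rw [hx', if_neg hx, neg_zero]

/-- The divisor `k·[w]`. -/
def deltaD (w : G.V) (k : ℤ) : G.V → ℤ := fun v => if v = w then k else 0

lemma degD_deltaD (w : G.V) (k : ℤ) : G.degD (G.deltaD w k) = k := by
  unfold degD deltaD
  rw [Finset.sum_ite_eq' Finset.univ w (fun _ => k)]
  simp

lemma eff_deltaD (w : G.V) {k : ℤ} (hk : 0 ≤ k) : G.Effective (G.deltaD w k) := by
  intro v
  unfold deltaD
  by_cases h : v = w <;> simp [h, hk]

/-- The property of `k` used in the definition of the rank of `D`. -/
def Good (D : G.V → ℤ) (k : ℤ) : Prop :=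
  ∀ F : G.V → ℤ, G.Effective F → G.degD F = k →
    ∃ E : G.V → ℤ, G.Effective E ∧ G.IsPrincipal (D - F - E)

lemma rank_eq (D : G.V → ℤ) : G.rank D = sSup {k | G.Good D k} := rfl

lemma dgon_eq : G.dgon = sInf {d : ℤ | ∃ D : G.V → ℤ, 1 ≤ G.rank D ∧ G.degD D = d} := rfl

lemma bddAbove_good (hM : Sharp M) (w : G.V) (D : G.V → ℤ) :
    BddAbove {k | G.Good D k} := by
  refine ⟨max (G.degD D) 0, fun k hk => ?_⟩
  rcases le_or_gt k 0 with h | h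
  · exact le_max_of_le_right h
  · apply le_max_of_le_left
    obtain ⟨E, hE, g, hg, hlap⟩ := hk (G.deltaD w k) (G.eff_deltaD w h.le) (G.degD_deltaD w k)
    have h0 : G.degD (D - G.deltaD w k - E) = 0 := by
      rw [← hlap]
      exact G.degD_lap hM hg
    rw [G.degD_sub, G.degD_sub, G.degD_deltaD] at h0
    have h1 := G.degD_nonneg hE
    omega

lemma good_one (w : G.V) {D : G.V → ℤ} {k : ℤ} (hk : G.Good D k) (h1 : 1 ≤ k) :
    G.Good D 1 := by
  intro F hF hdeg
  obtain ⟨E, hE, hprin⟩ := hk (F + G.deltaD w (k - 1))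
    (fun v => add_nonneg (hF v) (G.eff_deltaD w (by omega) v))
    (by rw [G.degD_add, hdeg, G.degD_deltaD]; ring)
  refine ⟨E + G.deltaD w (k - 1),
    fun v => add_nonneg (hE v) (G.eff_deltaD w (by omega) v), ?_⟩
  have heq : D - F - (E + G.deltaD w (k - 1)) = D - (F + G.deltaD w (k - 1)) - E := by
    funext v
    simp only [Pi.sub_apply, Pi.add_apply]
    ring
  rw [heq]
  exact hprin

lemma good_one_of_rank (hM : Sharp M) (w : G.V) {D : G.V → ℤ} (h : 1 ≤ G.rank D) :
    G.Good D 1 := by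
  have hbdd := G.bddAbove_good hM w D
  have hne : {k | G.Good D k}.Nonempty := by
    by_contra hne
    rw [Set.not_nonempty_iff_eq_empty] at hne
    rw [G.rank_eq, hne, Int.csSup_empty] at h
    exact absurd h (by norm_num)
  have hmem := Int.csSup_mem hne hbdd
  rw [G.rank_eq] at h
  exact G.good_one w hmem h

lemma one_le_rank_of_good (hM : Sharp M) (w : G.V) {D : G.V → ℤ} (h : G.Good D 1) :
    1 ≤ G.rank D :=
  le_csSup (G.bddAbove_good hM w D) h

lemma isPL_zero : G.IsPL (fun _ => 0) := fun _ _ => ⟨0, by simp⟩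

lemma lap_zero (hM : Sharp M) : G.lap (fun _ => (0 : Gp M)) = fun _ => 0 := by
  funext v
  unfold lap
  apply Finset.sum_eq_zero
  intro x _
  by_cases h : G.IsHalfEdge x ∧ G.r x = v.val
  · rw [if_pos h, G.slope_eq' hM h.1 (n := 0) (by simp)]
  · rw [if_neg h]

end MGraph

namespace MGraph.IsEdgeContraction

variable {M N : Type} [AddCancelCommMonoid M] [AddCancelCommMonoid N]
  {f : M →+ N} {G : MGraph M} {G' : MGraph N} {c : G.X → G'.X}
  (hc : MGraph.IsEdgeContraction f G G' c)

include hc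

lemma isHalfEdge_of (x : G.X) (h : G'.IsHalfEdge (c x)) :
    G.IsHalfEdge x ∧ f (G.l x) ≠ 0 := by
  have h2 : ¬ (G.IsVertex x ∨ f (G.l x) = 0) := fun h3 => h ((hc.vertex_iff x).mpr h3)
  push_neg at h2
  exact h2

lemma isHalfEdge_c {x : G.X} (hx : G.IsHalfEdge x) (hl : f (G.l x) ≠ 0) :
    G'.IsHalfEdge (c x) := by
  intro h
  rcases (hc.vertex_iff x).mp h with h1 | h2
  · exact hx h1
  · exact hl h2

lemma cV_rv (x : G.X) : hc.cV (G.rv x) = G'.rv (c x) := Subtype.ext (hc.map_r x)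

/-- A section of the vertex map `cV`. -/
def sec : G'.V → G.V := fun v' => G.rv (hc.surj v'.val).choose

lemma cV_sec (v' : G'.V) : hc.cV (hc.sec v') = v' := by
  apply Subtype.ext
  show c (G.r (hc.surj v'.val).choose) = v'.val
  rw [hc.map_r, (hc.surj v'.val).choose_spec]
  exact (G'.fix_iff v'.val).mp v'.property

lemma degD_push (D : G.V → ℤ) : G'.degD (hc.push D) = G.degD D := by
  unfold MGraph.degD MGraph.IsEdgeContraction.push
  rw [Finset.sum_comm]
  apply Finset.sum_congr rfl
  intro v _
  rw [Finset.sum_ite_eq Finset.univ (hc.cV v) (fun _ => D v)]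
  simp

lemma effective_push {D : G.V → ℤ} (hD : G.Effective D) : G'.Effective (hc.push D) :=
  fun v' => Finset.sum_nonneg fun v _ => by
    by_cases h : hc.cV v = v' <;> simp [h, hD v]

lemma push_sub (D E : G.V → ℤ) : hc.push (D - E) = hc.push D - hc.push E := by
  funext v'
  show (∑ v : G.V, if hc.cV v = v' then (D - E) v else 0)
      = (∑ v : G.V, if hc.cV v = v' then D v else 0)
        - (∑ v : G.V, if hc.cV v = v' then E v else 0)
  rw [← Finset.sum_sub_distrib]
  apply Finset.sum_congr rfl
  intro v _
  by_cases h : hc.cV v = v' <;> simp [h]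

lemma exists_push_eq (F' : G'.V → ℤ) (hF' : G'.Effective F') :
    ∃ F : G.V → ℤ, G.Effective F ∧ hc.push F = F' := by
  refine ⟨fun v => ∑ v' : G'.V, if hc.sec v' = v then F' v' else 0, ?_, ?_⟩
  · intro v
    exact Finset.sum_nonneg fun v' _ => by
      by_cases h : hc.sec v' = v <;> simp [h, hF' v']
  · funext w'
    show (∑ v : G.V, if hc.cV v = w'
        then (∑ v' : G'.V, if hc.sec v' = v then F' v' else 0) else 0) = F' w'
    have h1 : ∀ v : G.V, (if hc.cV v = w'
        then (∑ v' : G'.V, if hc.sec v' = v then F' v' else 0) else 0)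
          = ∑ v' : G'.V, if hc.sec v' = v ∧ hc.cV v = w' then F' v' else 0 := by
      intro v
      by_cases h : hc.cV v = w'
      · rw [if_pos h]
        apply Finset.sum_congr rfl
        intro v' _
        by_cases h2 : hc.sec v' = v
        · rw [if_pos h2, if_pos ⟨h2, h⟩]
        · rw [if_neg h2, if_neg (fun hh => h2 hh.1)]
      · rw [if_neg h]
        symm
        apply Finset.sum_eq_zero
        intro v' _
        rw [if_neg (fun hh => h hh.2)]
    rw [Finset.sum_congr rfl (fun v _ => h1 v), Finset.sum_comm]
    have h2 : ∀ v' : G'.V,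
        (∑ v : G.V, if hc.sec v' = v ∧ hc.cV v = w' then F' v' else 0)
          = if v' = w' then F' v' else 0 := by
      intro v'
      have h3 : ∀ v : G.V, (if hc.sec v' = v ∧ hc.cV v = w' then F' v' else 0)
          = if hc.sec v' = v then (if v' = w' then F' v' else 0) else 0 := by
        intro v
        by_cases h4 : hc.sec v' = v
        · subst h4
          rw [if_pos rfl]
          by_cases h5 : v' = w'
          · rw [if_pos ⟨rfl, by rw [hc.cV_sec]; exact h5⟩, if_pos h5]
          · rw [if_neg, if_neg h5]
            rintro ⟨-, h6⟩
            rw [hc.cV_sec] at h6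
            exact h5 h6
        · rw [if_neg (fun hh => h4 hh.1), if_neg h4]
      rw [Finset.sum_congr rfl (fun v _ => h3 v),
        Finset.sum_ite_eq Finset.univ (hc.sec v') (fun _ => if v' = w' then F' v' else 0)]
      simp
    rw [Finset.sum_congr rfl (fun v' _ => h2 v'),
      Finset.sum_ite_eq' Finset.univ w' F']
    simp

lemma push_principal (hM : Sharp M) (hN : Sharp N) {D : G.V → ℤ}
    (hD : G.IsPrincipal D) : G'.IsPrincipal (hc.push D) := by
  obtain ⟨g, hg, rfl⟩ := hD
  -- `map f ∘ g` is constant on the fibres of `c`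
  have hfib : ∀ u v : G.V, c u.val = c v.val → Gp.map f (g u) = Gp.map f (g v) := by
    intro u v huv
    have hglue := (hc.vertex_glue u.val v.val u.property v.property).mp huv
    have key : ∀ b : G.X,
        Relation.ReflTransGen
          (fun a b => ∃ x, G.IsHalfEdge x ∧ f (G.l x) = 0 ∧ G.r x = a ∧ G.r (G.i x) = b)
          u.val b →
        ∀ hb : G.IsVertex b, Gp.map f (g u) = Gp.map f (g ⟨b, hb⟩) := by
      intro b hb
      induction hb with
      | refl =>
        intro hb'
        rw [show (⟨u.val, hb'⟩ : G.V) = u from Subtype.ext rfl]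
      | @tail b d hab hbd ih =>
        intro hd
        obtain ⟨x, hx, hfl, hrx, hrix⟩ := hbd
        have hbv : G.IsVertex b := hrx ▸ G.isVertex_rv x
        rw [ih hbv]
        obtain ⟨n, hn⟩ := hg x hx
        have h1 : Gp.map f (g (G.rv x)) - Gp.map f (g (G.rv (G.i x))) = 0 := by
          rw [← map_sub, hn, map_zsmul, Gp.map_of, hfl, map_zero, smul_zero]
        have h2 : G.rv x = ⟨b, hbv⟩ := Subtype.ext hrx
        have h3 : G.rv (G.i x) = ⟨d, hd⟩ := Subtype.ext hrix
        rw [h2, h3] at h1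
        exact sub_eq_zero.mp h1
    exact key v.val hglue v.property
  set g' : G'.V → Gp N := fun v' => Gp.map f (g (hc.sec v')) with hg'def
  have hgc : ∀ v : G.V, g' (hc.cV v) = Gp.map f (g v) := by
    intro v
    exact hfib _ _ (congrArg Subtype.val (hc.cV_sec (hc.cV v)))
  have hdiff : ∀ (x : G.X), G.IsHalfEdge x → ∀ n : ℤ,
      g (G.rv x) - g (G.rv (G.i x)) = n • Gp.of (G.l x) →
      g' (G'.rv (c x)) - g' (G'.rv (G'.i (c x))) = n • Gp.of (G'.l (c x)) := by
    intro x hx n hn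
    rw [← hc.map_i, ← hc.cV_rv, ← hc.cV_rv, hgc, hgc, ← map_sub, hn, map_zsmul,
      Gp.map_of, hc.map_l]
  have hPL' : G'.IsPL g' := by
    intro x' hx'
    obtain ⟨x, rfl⟩ := hc.surj x'
    have hx : G.IsHalfEdge x := (hc.isHalfEdge_of x hx').1
    obtain ⟨n, hn⟩ := hg x hx
    exact ⟨n, hdiff x hx n hn⟩
  refine ⟨g', hPL', ?_⟩
  funext v'
  show G'.lap g' v' = hc.push (G.lap g) v'
  have hR : hc.push (G.lap g) v'
      = ∑ x : G.X, (if G.IsHalfEdge x ∧ c (G.r x) = v'.val then G.slope g x else 0) := by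
    show (∑ v : G.V, if hc.cV v = v'
        then (∑ x : G.X, if G.IsHalfEdge x ∧ G.r x = v.val then G.slope g x else 0) else 0) = _
    have h1 : ∀ v : G.V, (if hc.cV v = v'
        then (∑ x : G.X, if G.IsHalfEdge x ∧ G.r x = v.val then G.slope g x else 0) else 0)
          = ∑ x : G.X, if hc.cV v = v' ∧ G.IsHalfEdge x ∧ G.r x = v.val
              then G.slope g x else 0 := by
      intro v
      by_cases h : hc.cV v = v'
      · rw [if_pos h]
        apply Finset.sum_congr rfl
        intro x _
        by_cases h2 : G.IsHalfEdge x ∧ G.r x = v.val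
        · rw [if_pos h2, if_pos ⟨h, h2.1, h2.2⟩]
        · rw [if_neg h2, if_neg (fun hh => h2 ⟨hh.2.1, hh.2.2⟩)]
      · rw [if_neg h]
        symm
        apply Finset.sum_eq_zero
        intro x _
        rw [if_neg (fun hh => h hh.1)]
    rw [Finset.sum_congr rfl (fun v _ => h1 v), Finset.sum_comm]
    apply Finset.sum_congr rfl
    intro x _
    have h2 : ∀ v : G.V, (if hc.cV v = v' ∧ G.IsHalfEdge x ∧ G.r x = v.val
        then G.slope g x else 0)
          = if v = G.rv x then (if G.IsHalfEdge x ∧ c (G.r x) = v'.val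
              then G.slope g x else 0) else 0 := by
      intro v
      by_cases hv : v = G.rv x
      · subst hv
        by_cases h3 : G.IsHalfEdge x ∧ c (G.r x) = v'.val
        · rw [if_pos ⟨Subtype.ext h3.2, h3.1, rfl⟩, if_pos rfl, if_pos h3]
        · rw [if_neg, if_pos rfl, if_neg h3]
          rintro ⟨ha, hb, -⟩
          exact h3 ⟨hb, congrArg Subtype.val ha⟩
      · rw [if_neg, if_neg hv]
        rintro ⟨-, -, h4⟩
        exact hv (Subtype.ext h4.symm)
    rw [Finset.sum_congr rfl (fun v _ => h2 v),
      Finset.sum_ite_eq' Finset.univ (G.rv x)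
        (fun _ => if G.IsHalfEdge x ∧ c (G.r x) = v'.val then G.slope g x else 0)]
    simp
  rw [hR]
  have hsplit : ∀ x : G.X, (if G.IsHalfEdge x ∧ c (G.r x) = v'.val then G.slope g x else 0)
      = (if G.IsHalfEdge x ∧ c (G.r x) = v'.val ∧ f (G.l x) ≠ 0 then G.slope g x else 0)
        + (if G.IsHalfEdge x ∧ c (G.r x) = v'.val ∧ f (G.l x) = 0
            then G.slope g x else 0) := by
    intro x
    by_cases h1 : G.IsHalfEdge x ∧ c (G.r x) = v'.val
    · by_cases h2 : f (G.l x) = 0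
      · rw [if_pos h1, if_neg (by rintro ⟨-, -, h⟩; exact h h2),
          if_pos ⟨h1.1, h1.2, h2⟩, zero_add]
      · rw [if_pos h1, if_pos ⟨h1.1, h1.2, h2⟩,
          if_neg (by rintro ⟨-, -, h⟩; exact h2 h), add_zero]
    · rw [if_neg h1, if_neg (fun h => h1 ⟨h.1, h.2.1⟩),
        if_neg (fun h => h1 ⟨h.1, h.2.1⟩), add_zero]
  rw [Finset.sum_congr rfl (fun x _ => hsplit x), Finset.sum_add_distrib]
  have hzero : (∑ x : G.X, if G.IsHalfEdge x ∧ c (G.r x) = v'.val ∧ f (G.l x) = 0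
      then G.slope g x else 0) = 0 := by
    have hcond : ∀ x : G.X, (G.IsHalfEdge x ∧ c (G.r x) = v'.val ∧ f (G.l x) = 0) →
        (G.IsHalfEdge (G.i x) ∧ c (G.r (G.i x)) = v'.val ∧ f (G.l (G.i x)) = 0) := by
      rintro x ⟨h1, h2, h3⟩
      refine ⟨G.isHalfEdge_i h1, ?_, by rw [G.l_i]; exact h3⟩
      have hv : G'.IsVertex (c x) := (hc.vertex_iff x).mpr (Or.inr h3)
      have hv' : G'.i (c x) = c x := hv
      have hrr : c (G.r (G.i x)) = c (G.r x) := by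
        rw [hc.map_r, hc.map_i, hv', ← hc.map_r]
      rw [hrr]
      exact h2
    apply sum_invol_zero G.i G.i_invol
    intro x
    by_cases h : G.IsHalfEdge x ∧ c (G.r x) = v'.val ∧ f (G.l x) = 0
    · rw [if_pos (hcond x h), if_pos h, G.slope_i' hM hg h.1]
    · rw [if_neg, if_neg h, neg_zero]
      intro h'
      have h'' := hcond _ h'
      rw [G.i_invol] at h''
      exact h h''
  rw [hzero, add_zero]
  show (∑ x' : G'.X, if G'.IsHalfEdge x' ∧ G'.r x' = v'.val then G'.slope g' x' else 0) = _
  rw [← Finset.sum_filter (fun x' => G'.IsHalfEdge x' ∧ G'.r x' = v'.val) (G'.slope g'),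
    ← Finset.sum_filter (fun x => G.IsHalfEdge x ∧ c (G.r x) = v'.val ∧ f (G.l x) ≠ 0)
      (G.slope g)]
  refine (Finset.sum_bij (fun (x : G.X) _ => c x) ?_ ?_ ?_ ?_).symm
  · intro x hx
    simp only [Finset.mem_filter, Finset.mem_univ, true_and] at hx ⊢
    obtain ⟨h1, h2, h3⟩ := hx
    refine ⟨hc.isHalfEdge_c h1 h3, ?_⟩
    rw [← hc.map_r]
    exact h2
  · intro x1 h1 x2 h2 he
    simp only [Finset.mem_filter, Finset.mem_univ, true_and] at h1 h2
    exact hc.inj_halfedges x1 x2 (hc.isHalfEdge_c h1.1 h1.2.2) he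
  · intro x' hx'
    simp only [Finset.mem_filter, Finset.mem_univ, true_and] at hx'
    obtain ⟨x, rfl⟩ := hc.surj x'
    have h4 := hc.isHalfEdge_of x hx'.1
    refine ⟨x, ?_, rfl⟩
    simp only [Finset.mem_filter, Finset.mem_univ, true_and]
    refine ⟨h4.1, ?_, h4.2⟩
    rw [hc.map_r]
    exact hx'.2
  · intro x hx
    simp only [Finset.mem_filter, Finset.mem_univ, true_and] at hx
    obtain ⟨n, hn⟩ := hg x hx.1
    rw [G.slope_eq' hM hx.1 hn]
    exact (G'.slope_eq' hN (hc.isHalfEdge_c hx.1 hx.2.2) (hdiff x hx.1 n hn)).symm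

end MGraph.IsEdgeContraction

end Aux

/-- **Corollary 4.6.** Let `Γ` be an `M`-metrised graph, `f : M → N` a homomorphism of
sharp integral monoids, and `Γ'` the edge contraction of `Γ` along `f`. Then
`dgon(Γ') ≤ dgon(Γ)`. -/
theorem MGraph.IsEdgeContraction.dgon_le (M N : Type) [AddCancelCommMonoid M]
    [AddCancelCommMonoid N] (hsharpM : Sharp M) (hsharpN : Sharp N)
    (G : MGraph M) (G' : MGraph N) (hconn : G.IsConnected)
    (f : M →+ N) (c : G.X → G'.X) (hc : MGraph.IsEdgeContraction f G G' c) :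
    G'.dgon ≤ G.dgon := by
  obtain ⟨⟨x₀⟩, -⟩ := hconn
  set w : G.V := G.rv x₀ with hw
  set w' : G'.V := hc.cV w with hw'
  have hsubset : {d : ℤ | ∃ D : G.V → ℤ, 1 ≤ G.rank D ∧ G.degD D = d} ⊆
      {d : ℤ | ∃ D' : G'.V → ℤ, 1 ≤ G'.rank D' ∧ G'.degD D' = d} := by
    rintro d ⟨D, hD, rfl⟩
    refine ⟨hc.push D, ?_, hc.degD_push D⟩
    have hGood := G.good_one_of_rank hsharpM w hD
    have hGood' : G'.Good (hc.push D) 1 := by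
      intro F' hF' hdeg'
      obtain ⟨F, hF, hpF⟩ := hc.exists_push_eq F' hF'
      have hdegF : G.degD F = 1 := by rw [← hc.degD_push F, hpF, hdeg']
      obtain ⟨E, hE, hprin⟩ := hGood F hF hdegF
      refine ⟨hc.push E, hc.effective_push hE, ?_⟩
      have heq : hc.push D - F' - hc.push E = hc.push (D - F - E) := by
        rw [hc.push_sub, hc.push_sub, hpF]
      rw [heq]
      exact hc.push_principal hsharpM hsharpN hprin
    exact G'.one_le_rank_of_good hsharpN w' hGood'
  have hne : {d : ℤ | ∃ D : G.V → ℤ, 1 ≤ G.rank D ∧ G.degD D = d}.Nonempty := by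
    refine ⟨G.degD (fun _ => 1), fun _ => 1, ?_, rfl⟩
    apply G.one_le_rank_of_good hsharpM w
    intro F hF hdeg
    refine ⟨(fun _ => 1) - F, ?_, ?_⟩
    · intro v
      have h1 : F v ≤ ∑ u : G.V, F u :=
        Finset.single_le_sum (fun u _ => hF u) (Finset.mem_univ v)
      have h2 : (∑ u : G.V, F u) = 1 := hdeg
      simp only [Pi.sub_apply]
      omega
    · rw [sub_self]
      exact ⟨fun _ => 0, G.isPL_zero, by rw [G.lap_zero hsharpM]; rfl⟩
  have hbdd : BddBelow {d : ℤ | ∃ D' : G'.V → ℤ, 1 ≤ G'.rank D' ∧ G'.degD D' = d} := by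
    refine ⟨0, ?_⟩
    rintro d ⟨D', hD', rfl⟩
    have hGood := G'.good_one_of_rank hsharpN w' hD'
    obtain ⟨E, hE, g, hg, hlap⟩ := hGood (G'.deltaD w' 1)
      (G'.eff_deltaD w' (by norm_num)) (G'.degD_deltaD w' 1)
    have h0 : G'.degD (D' - G'.deltaD w' 1 - E) = 0 := by
      rw [← hlap]
      exact G'.degD_lap hsharpN hg
    rw [G'.degD_sub, G'.degD_sub, G'.degD_deltaD] at h0
    have h1 := G'.degD_nonneg hE
    omega
  rw [G.dgon_eq, G'.dgon_eq]
  exact csInf_le_csInf hbdd hne hsubset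

end
end

section
/- Let Γ be an ℕ-metrised graph without loops, and let G be the underlying graph. Let H be the graph obtained from G by subdividing every edge {e, i(e)} of G exactly l(e) − 1 times, regarded as an ℕ-metrised graph in which every edge has length 1. Then dgon(Γ) ≥ dgon(H). -/
noncomputable section
open scoped Classical

/-! ### Groupification of a cancellative additive commutative monoid -/

variable (M : Type) [AddCancelCommMonoid M]

/-! ### Unit subdivision of an `ℕ`-metrised graph

Given an `ℕ`-metrised graph `Γ`, the graph `Subdiv Γ` is the subdivision of the
underlying graph of `Γ` in which every edge `{e, i e}` is subdivided exactly
`l e - 1` times (so an edge of length `k` becomes a path of `k` edges), regarded as an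
`ℕ`-metrised graph in which every edge has length `1`. -/

namespace MGraph

variable (G : MGraph ℕ)

/-- An arbitrary enumeration of `X`, used only to pick a canonical half-edge inside each
edge of `G`. -/
def ordx : G.X → ℕ := fun x => ((Fintype.equivFin G.X) x : ℕ)

/-- Interior vertices of the subdivision: the vertex at distance `j` from `r e` on the
path replacing the edge `{e, i e}` (where `0 < j < l e`), recorded on the canonical
half-edge of the edge. -/
def IntVert : Type :=
  {p : G.X × ℕ // G.IsHalfEdge p.1 ∧ 0 < p.2 ∧ p.2 < G.l p.1 ∧
    ordx G p.1 ≤ ordx G (G.i p.1)}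

/-- Half-edges of the subdivision: the half-edge of the `j`-th unit segment (counted from
`r e`) of the path replacing the edge `{e, i e}`, rooted at the endpoint at distance `j`
from `r e` (where `0 ≤ j < l e`). -/
def SubH : Type := {p : G.X × ℕ // G.IsHalfEdge p.1 ∧ p.2 < G.l p.1}

instance : Finite (IntVert G) :=
  Finite.of_injective
    (fun p => ((p.val.1, ⟨p.val.2, by
      have h2 := p.property.2.2.1
      have hle : G.l p.val.1 ≤ Finset.univ.sup G.l := Finset.le_sup (Finset.mem_univ _)
      omega⟩) : G.X × Fin (Finset.univ.sup G.l + 1)))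
    (by
      intro p q h
      apply Subtype.ext
      have h1 := congrArg Prod.fst h
      have h2 := congrArg (fun z => (z.2 : ℕ)) h
      exact Prod.ext h1 h2)

instance : Finite (SubH G) :=
  Finite.of_injective
    (fun p => ((p.val.1, ⟨p.val.2, by
      have h2 := p.property.2
      have hle : G.l p.val.1 ≤ Finset.univ.sup G.l := Finset.le_sup (Finset.mem_univ _)
      omega⟩) : G.X × Fin (Finset.univ.sup G.l + 1)))
    (by
      intro p q h
      apply Subtype.ext
      have h1 := congrArg Prod.fst h
      have h2 := congrArg (fun z => (z.2 : ℕ)) h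
      exact Prod.ext h1 h2)

/-- Vertices of the subdivision: old vertices plus interior vertices. -/
abbrev SubV : Type := G.V ⊕ IntVert G

/-- The canonical presentation of the interior vertex at distance `j` from `r e` along
the path replacing the edge `{e, i e}` (so also at distance `l e - j` from `r (i e)`). -/
def ivtx (e : G.X) (he : G.IsHalfEdge e) (j : ℕ) (hj : 0 < j) (hj' : j < G.l e) :
    IntVert G :=
  if h : ordx G e ≤ ordx G (G.i e) then ⟨(e, j), he, hj, hj', h⟩
  else
    ⟨(G.i e, G.l e - j), by
      refine ⟨?_, by omega, ?_, ?_⟩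
      · show G.i (G.i e) ≠ G.i e
        rw [G.i_invol]
        exact fun hx => he hx.symm
      · show G.l e - j < G.l (G.i e)
        rw [G.l_i]
        omega
      · show ordx G (G.i e) ≤ ordx G (G.i (G.i e))
        rw [G.i_invol]
        omega⟩

/-- The root map of the subdivision. -/
def subR : SubV G ⊕ SubH G → SubV G ⊕ SubH G
  | .inl v => .inl v
  | .inr p =>
      if h : p.val.2 = 0 then .inl (.inl (G.rv p.val.1))
      else .inl (.inr (ivtx G p.val.1 p.property.1 p.val.2 (Nat.pos_of_ne_zero h)
        p.property.2))

/-- The involution of the subdivision: the `j`-th segment of `e`, seen from its other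
endpoint, is the `(l e - 1 - j)`-th segment of `i e`. -/
def subI : SubV G ⊕ SubH G → SubV G ⊕ SubH G
  | .inl v => .inl v
  | .inr p =>
      .inr ⟨(G.i p.val.1, G.l p.val.1 - 1 - p.val.2), by
        have h1 : p.val.2 < G.l p.val.1 := p.property.2
        refine ⟨?_, ?_⟩
        · show G.i (G.i p.val.1) ≠ G.i p.val.1
          rw [G.i_invol]
          exact fun hx => p.property.1 hx.symm
        · show G.l p.val.1 - 1 - p.val.2 < G.l (G.i p.val.1)
          rw [G.l_i]
          have h0 : G.l p.val.1 ≠ 0 :=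
            fun h => p.property.1 ((G.l_zero_iff p.val.1).mp h)
          omega⟩

/-- The length function of the subdivision: every edge has length `1`. -/
def subL : SubV G ⊕ SubH G → ℕ
  | .inl _ => 0
  | .inr _ => 1

lemma subI_ne (p : SubH G) : subI G (Sum.inr p) ≠ Sum.inr p := by
  intro h
  apply p.property.1
  have h' := congrArg Subtype.val (Sum.inr.inj h)
  exact congrArg Prod.fst h'

/-- The subdivision of (the underlying graph of) the `ℕ`-metrised graph `G` in which
every edge `{e, i e}` is subdivided exactly `l e - 1` times, regarded as an `ℕ`-metrised
graph in which every edge has length `1`. -/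
noncomputable def Subdiv : MGraph ℕ where
  X := SubV G ⊕ SubH G
  finX := Fintype.ofFinite _
  r := subR G
  i := subI G
  r_idem := by
    rintro (v | p)
    · rfl
    · by_cases h : p.val.2 = 0 <;> simp [subR, h]
  i_invol := by
    rintro (v | p)
    · rfl
    · apply congrArg Sum.inr
      apply Subtype.ext
      have h1 : p.val.2 < G.l p.val.1 := p.property.2
      have h0 : G.l p.val.1 ≠ 0 := fun h => p.property.1 ((G.l_zero_iff p.val.1).mp h)
      simp only [subI]
      refine Prod.ext (G.i_invol p.val.1) ?_
      show G.l (G.i p.val.1) - 1 - (G.l p.val.1 - 1 - p.val.2) = p.val.2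
      rw [G.l_i]
      omega
  fix_iff := by
    rintro (v | p)
    · simp [subI, subR]
    · constructor
      · intro h
        exact absurd h (subI_ne G p)
      · intro h
        exfalso
        by_cases h0 : p.val.2 = 0 <;> simp [subR, h0] at h
  l := subL G
  l_i := by rintro (v | p) <;> rfl
  l_zero_iff := by
    rintro (v | p)
    · simp [subL, subI]
    · simp only [subL]
      constructor
      · intro h
        exact absurd h one_ne_zero
      · intro h
        exact absurd h (subI_ne G p)

/-- The same underlying graph as `G`, re-equipped with the `ℕ`-valued metric `l₂`. -/
def reMetrize {M : Type} [AddCancelCommMonoid M] (G : MGraph M) (l₂ : G.X → ℕ)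
    (h1 : ∀ x, l₂ (G.i x) = l₂ x) (h2 : ∀ x, l₂ x = 0 ↔ G.i x = x) : MGraph ℕ where
  X := G.X
  finX := G.finX
  r := G.r
  i := G.i
  r_idem := G.r_idem
  i_invol := G.i_invol
  fix_iff := G.fix_iff
  l := l₂
  l_i := h1
  l_zero_iff := h2

end MGraph

namespace Gp

def toInt : Gp ℕ →+ ℤ where
  toFun := Quotient.lift (fun p : ℕ × ℕ => (p.1 : ℤ) - p.2) (by
    rintro p q h
    have h' : p.1 + q.2 = q.1 + p.2 := h
    show (p.1 : ℤ) - p.2 = (q.1 : ℤ) - q.2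
    omega)
  map_zero' := by show ((0:ℕ) : ℤ) - ((0:ℕ):ℤ) = 0; simp
  map_add' := by
    intro a b
    induction a using Quotient.inductionOn with | h a =>
    induction b using Quotient.inductionOn with | h b =>
    show ((a.1 + b.1 : ℕ) : ℤ) - ((a.2 + b.2 : ℕ) : ℤ) = ((a.1:ℤ) - a.2) + ((b.1:ℤ) - b.2)
    push_cast; ring

lemma toInt_mk (a b : ℕ) : toInt (mk a b) = (a : ℤ) - b := rfl

lemma toInt_of (n : ℕ) : toInt (of n) = n := by
  show ((n:ℤ) - ((0:ℕ):ℤ)) = n; simp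

lemma of_eq_smul (n : ℕ) : of n = n • of 1 := by
  have : n • (1:ℕ) = n := by simp
  rw [← this, map_nsmul, this]

end Gp

namespace MGraph

variable {Γ : MGraph ℕ}

lemma halfedge_i {x : Γ.X} (hx : Γ.IsHalfEdge x) : Γ.IsHalfEdge (Γ.i x) := by
  show Γ.i (Γ.i x) ≠ Γ.i x
  rw [Γ.i_invol]
  exact fun h => hx h.symm

lemma lcast_ne {x : Γ.X} (hx : Γ.IsHalfEdge x) : (Γ.l x : ℤ) ≠ 0 := by
  have : Γ.l x ≠ 0 := fun h => hx ((Γ.l_zero_iff x).mp h)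
  exact_mod_cast this

lemma l_pos {x : Γ.X} (hx : Γ.IsHalfEdge x) : 0 < Γ.l x := by
  have : Γ.l x ≠ 0 := fun h => hx ((Γ.l_zero_iff x).mp h)
  omega

variable (Γ) in
/-- integer slope of an integer-valued function along a half-edge -/
def dsl (φ : Γ.V → ℤ) (x : Γ.X) : ℤ :=
  (φ (Γ.rv x) - φ (Γ.rv (Γ.i x))) / (Γ.l x : ℤ)

variable (Γ) in
/-- divisibility condition: `φ` is PL as an integer-valued function -/
def Dvb (φ : Γ.V → ℤ) : Prop :=
  ∀ x, Γ.IsHalfEdge x → ((Γ.l x : ℤ)) ∣ (φ (Γ.rv x) - φ (Γ.rv (Γ.i x)))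

variable (Γ) in
/-- integer Laplacian -/
def ILap (φ : Γ.V → ℤ) : Γ.V → ℤ :=
  fun v => ∑ x : Γ.X, if Γ.IsHalfEdge x ∧ Γ.r x = v.val then Γ.dsl φ x else 0

lemma dsl_mul {φ : Γ.V → ℤ} (hφ : Γ.Dvb φ) {x : Γ.X} (hx : Γ.IsHalfEdge x) :
    Γ.dsl φ x * (Γ.l x : ℤ) = φ (Γ.rv x) - φ (Γ.rv (Γ.i x)) :=
  Int.ediv_mul_cancel (hφ x hx)

lemma dsl_i {φ : Γ.V → ℤ} (hφ : Γ.Dvb φ) {x : Γ.X} (hx : Γ.IsHalfEdge x) :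
    Γ.dsl φ (Γ.i x) = - Γ.dsl φ x := by
  have h1 := dsl_mul hφ (halfedge_i hx)
  rw [Γ.i_invol, Γ.l_i] at h1
  have h2 := dsl_mul hφ hx
  have := lcast_ne hx
  have : Γ.dsl φ (Γ.i x) * (Γ.l x : ℤ) = (- Γ.dsl φ x) * (Γ.l x : ℤ) := by
    rw [h1]; linarith [h2]
  exact mul_right_cancel₀ (lcast_ne hx) this

lemma slope_mul {g : Γ.V → Gp ℕ} (hg : Γ.IsPL g) {x : Γ.X} (hx : Γ.IsHalfEdge x) :
    (Γ.slope g x) * (Γ.l x : ℤ) = Gp.toInt (g (Γ.rv x)) - Gp.toInt (g (Γ.rv (Γ.i x))) := by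
  unfold slope
  rw [dif_pos (hg x hx)]
  have hspec := (hg x hx).choose_spec
  have := congrArg Gp.toInt hspec
  rw [map_sub, map_zsmul, Gp.toInt_of, smul_eq_mul] at this
  exact this.symm

lemma isPrincipal_iff (D : Γ.V → ℤ) :
    Γ.IsPrincipal D ↔ ∃ φ, Γ.Dvb φ ∧ Γ.ILap φ = D := by
  constructor
  · rintro ⟨g, hg, hlap⟩
    refine ⟨fun v => Gp.toInt (g v), fun x hx => ⟨Γ.slope g x, by rw [← slope_mul hg hx]; ring⟩, ?_⟩
    rw [← hlap]
    funext v
    unfold ILap lap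
    apply Finset.sum_congr rfl
    intro x _
    by_cases hc : Γ.IsHalfEdge x ∧ Γ.r x = v.val
    · rw [if_pos hc, if_pos hc]
      have := slope_mul hg hc.1
      unfold dsl
      rw [← this, Int.mul_ediv_cancel _ (lcast_ne hc.1)]
    · rw [if_neg hc, if_neg hc]
  · rintro ⟨φ, hφ, hlap⟩
    refine ⟨fun v => φ v • Gp.of 1, ?_, ?_⟩
    · intro x hx
      refine ⟨Γ.dsl φ x, ?_⟩
      rw [← sub_smul, Gp.of_eq_smul (Γ.l x), smul_comm, ← natCast_zsmul, smul_smul]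
      rw [mul_comm, dsl_mul hφ hx]
    · rw [← hlap]
      funext v
      unfold ILap lap
      apply Finset.sum_congr rfl
      intro x _
      by_cases hc : Γ.IsHalfEdge x ∧ Γ.r x = v.val
      · rw [if_pos hc, if_pos hc]
        set g : Γ.V → Gp ℕ := fun v => φ v • Gp.of 1 with hgdef
        have hgPL : Γ.IsPL g := by
          intro y hy
          refine ⟨Γ.dsl φ y, ?_⟩
          rw [hgdef]
          show φ (Γ.rv y) • Gp.of 1 - φ (Γ.rv (Γ.i y)) • Gp.of 1 = _
          rw [← sub_smul, Gp.of_eq_smul (Γ.l y), smul_comm, ← natCast_zsmul, smul_smul]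
          rw [mul_comm, dsl_mul hφ hy]
        have h1 := slope_mul hgPL hc.1
        have h2 : ∀ v, Gp.toInt (g v) = φ v := by
          intro v; rw [hgdef]
          show Gp.toInt (φ v • Gp.of 1) = φ v
          rw [map_zsmul, Gp.toInt_of]
          simp
        rw [h2, h2] at h1
        have h3 := dsl_mul hφ hc.1
        have : Γ.slope g x * (Γ.l x : ℤ) = Γ.dsl φ x * (Γ.l x : ℤ) := by rw [h1, h3]
        exact mul_right_cancel₀ (lcast_ne hc.1) this
      · rw [if_neg hc, if_neg hc]

end MGraph


namespace MGraph

variable {Γ : MGraph ℕ}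

variable (Γ) in
/-- Dirac divisor at a vertex. -/
def dirac (w : Γ.V) : Γ.V → ℤ := fun v => if v = w then 1 else 0

lemma effective_dirac (w : Γ.V) : Γ.Effective (Γ.dirac w) := by
  intro v; unfold dirac; split_ifs <;> omega

lemma degD_dirac (w : Γ.V) : Γ.degD (Γ.dirac w) = 1 := by
  unfold degD dirac
  rw [Finset.sum_ite_eq' Finset.univ w (fun _ => (1:ℤ))]
  simp

lemma degD_add_smul_dirac (F : Γ.V → ℤ) (w : Γ.V) (c : ℤ) :
    Γ.degD (fun v => F v + (if v = w then c else 0)) = Γ.degD F + c := by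
  unfold degD
  rw [Finset.sum_add_distrib, Finset.sum_ite_eq' Finset.univ w (fun _ => c)]
  simp

lemma degD_nonneg_s18 {F : Γ.V → ℤ} (hF : Γ.Effective F) : 0 ≤ Γ.degD F :=
  Finset.sum_nonneg (fun v _ => hF v)

lemma degD_sub_s18 (A B : Γ.V → ℤ) : Γ.degD (A - B) = Γ.degD A - Γ.degD B := by
  unfold degD
  rw [← Finset.sum_sub_distrib]
  rfl

lemma eff_deg_one {F : Γ.V → ℤ} (hF : Γ.Effective F) (h1 : Γ.degD F = 1) :
    ∃ w, F = Γ.dirac w := by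
  have hex : ∃ w : Γ.V, 1 ≤ F w := by
    by_contra hno
    push_neg at hno
    have : Γ.degD F ≤ 0 := Finset.sum_nonpos (fun v _ => by have := hno v; omega)
    omega
  obtain ⟨w, hw⟩ := hex
  have hsplit : Γ.degD F = F w + ∑ v ∈ Finset.univ.erase w, F v := by
    unfold degD
    rw [← Finset.add_sum_erase Finset.univ F (Finset.mem_univ w)]
  have herase_nonneg : 0 ≤ ∑ v ∈ Finset.univ.erase w, F v :=
    Finset.sum_nonneg (fun v _ => hF v)
  have hFw : F w = 1 := by omega
  have hzero : ∑ v ∈ Finset.univ.erase w, F v = 0 := by omega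
  have hall : ∀ v ∈ Finset.univ.erase w, F v = 0 := by
    intro v hv
    have := (Finset.sum_eq_zero_iff_of_nonneg (fun u _ => hF u)).mp hzero
    exact this v hv
  refine ⟨w, funext fun v => ?_⟩
  unfold dirac
  by_cases hv : v = w
  · subst hv; rw [if_pos rfl]; exact hFw
  · rw [if_neg hv]; exact hall v (Finset.mem_erase.mpr ⟨hv, Finset.mem_univ v⟩)

lemma degD_ILap {φ : Γ.V → ℤ} (hφ : Γ.Dvb φ) : Γ.degD (Γ.ILap φ) = 0 := by
  unfold degD ILap
  rw [Finset.sum_comm]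
  have step1 : ∀ x : Γ.X, (∑ v : Γ.V, if Γ.IsHalfEdge x ∧ Γ.r x = v.val then Γ.dsl φ x else 0)
      = if Γ.IsHalfEdge x then Γ.dsl φ x else 0 := by
    intro x
    have : ∀ v : Γ.V, (if Γ.IsHalfEdge x ∧ Γ.r x = v.val then Γ.dsl φ x else 0)
        = if v = Γ.rv x then (if Γ.IsHalfEdge x then Γ.dsl φ x else 0) else 0 := by
      intro v
      by_cases hA : Γ.IsHalfEdge x <;> by_cases hv : v = Γ.rv x
      · subst hv; simp [hA, rv]
      · have : Γ.r x ≠ v.val := fun h => hv (Subtype.ext h.symm)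
        simp [hA, hv, this]
      · subst hv; simp [hA]
      · have : Γ.r x ≠ v.val := fun h => hv (Subtype.ext h.symm)
        simp [hA, hv, this]
    rw [Finset.sum_congr rfl (fun v _ => this v)]
    rw [Finset.sum_ite_eq' Finset.univ (Γ.rv x) (fun _ => if Γ.IsHalfEdge x then Γ.dsl φ x else 0)]
    simp
  rw [Finset.sum_congr rfl (fun x _ => step1 x)]
  apply Finset.sum_ninvolution Γ.i
  · intro x
    by_cases hx : Γ.IsHalfEdge x
    · rw [if_pos hx, if_pos (halfedge_i hx), dsl_i hφ hx]; ring
    · have hxx : Γ.i x = x := by by_contra h; exact hx h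
      rw [hxx, if_neg hx]; ring
  · intro x hx
    have : Γ.IsHalfEdge x := by
      by_contra h; rw [if_neg h] at hx; exact hx rfl
    exact this
  · intro x; exact Finset.mem_univ _
  · exact Γ.i_invol

lemma rank_ge_one_iff (hne : Nonempty Γ.V) (D : Γ.V → ℤ) :
    1 ≤ Γ.rank D ↔ ∀ F, Γ.Effective F → Γ.degD F = 1 →
      ∃ E, Γ.Effective E ∧ Γ.IsPrincipal (D - F - E) := by
  set S : Set ℤ := {k : ℤ | ∀ F : Γ.V → ℤ, Γ.Effective F → Γ.degD F = k →
    ∃ E : Γ.V → ℤ, Γ.Effective E ∧ Γ.IsPrincipal (D - F - E)} with hS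
  obtain ⟨v₀⟩ := hne
  have hdown : ∀ k ∈ S, ∀ k', k' ≤ k → k' ∈ S := by
    intro k hk k' hk' F hF hdF
    set F' : Γ.V → ℤ := fun v => F v + (if v = v₀ then (k - k') else 0) with hF'
    have hF'eff : Γ.Effective F' := by
      intro v; have := hF v; rw [hF']; dsimp only; split_ifs <;> omega
    have hF'deg : Γ.degD F' = k := by
      rw [hF', degD_add_smul_dirac, hdF]; ring
    obtain ⟨E, hEeff, hEP⟩ := hk F' hF'eff hF'deg
    refine ⟨fun v => E v + (if v = v₀ then (k - k') else 0), ?_, ?_⟩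
    · intro v; have := hEeff v; dsimp only; split_ifs <;> omega
    · have : D - F - (fun v => E v + (if v = v₀ then (k - k') else 0)) = D - F' - E := by
        funext v; rw [hF']
        show D v - F v - (E v + _) = D v - (F v + _) - E v
        ring
      rw [this]; exact hEP
  have hbdd : BddAbove S := by
    refine ⟨max (Γ.degD D) 0, fun k hk => ?_⟩
    rcases le_or_gt k 0 with h | h
    · exact le_trans h (le_max_right _ _)
    · set F : Γ.V → ℤ := fun v => if v = v₀ then k else 0 with hF
      have hFeff : Γ.Effective F := by intro v; rw [hF]; dsimp only; split_ifs <;> omega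
      have hFdeg : Γ.degD F = k := by
        rw [hF]; unfold degD
        rw [Finset.sum_ite_eq' Finset.univ v₀ (fun _ => k)]
        simp
      obtain ⟨E, hEeff, hEP⟩ := hk F hFeff hFdeg
      obtain ⟨φ, hφ, hILap⟩ := (isPrincipal_iff _).mp hEP
      have hdeg0 : Γ.degD (D - F - E) = 0 := by rw [← hILap]; exact degD_ILap hφ
      rw [degD_sub_s18, degD_sub_s18, hFdeg] at hdeg0
      have := degD_nonneg_s18 hEeff
      have : k ≤ Γ.degD D := by omega
      exact le_trans this (le_max_left _ _)
  have hne' : S.Nonempty := by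
    refine ⟨-1, fun F hF hdF => ?_⟩
    exfalso
    have := degD_nonneg_s18 hF
    omega
  constructor
  · intro h1
    have hmem : sSup S ∈ S := Int.csSup_mem hne' hbdd
    have h1' : (1:ℤ) ∈ S := hdown _ hmem 1 h1
    intro F hF hdF
    exact h1' F hF hdF
  · intro h
    have h1 : (1:ℤ) ∈ S := fun F hF hdF => h F hF hdF
    exact le_csSup hbdd h1

end MGraph


namespace MGraph

variable (G : MGraph ℕ)

noncomputable instance : Fintype (IntVert G) := Fintype.ofFinite _
noncomputable instance : Fintype (SubH G) := Fintype.ofFinite _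

/-- root vertex (as an element of `SubV G`) of a potential half-edge of the subdivision -/
def rt0 : G.X × ℕ → SubV G := fun q =>
  if h : q.2 ≠ 0 ∧ G.IsHalfEdge q.1 ∧ q.2 < G.l q.1 then
    Sum.inr (ivtx G q.1 h.2.1 q.2 (Nat.pos_of_ne_zero h.1) h.2.2)
  else Sum.inl (G.rv q.1)

/-- the far endpoint of a potential half-edge of the subdivision -/
def far0 : G.X × ℕ → SubV G := fun q => rt0 G (G.i q.1, G.l q.1 - 1 - q.2)

/-- lift of a function on `SubV G` to the vertices of `Subdiv G` -/
def liftD (ψ : SubV G → ℤ) : (Subdiv G).V → ℤ := fun z => Sum.elim ψ (fun _ => 0) z.val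

def mkV (v : SubV G) : (Subdiv G).V := ⟨Sum.inl v, rfl⟩

lemma mkV_inj : Function.Injective (mkV G) := by
  intro a b h
  have := congrArg Subtype.val h
  exact Sum.inl.inj this

lemma vert_cases (z : (Subdiv G).V) : ∃ v, z = mkV G v := by
  obtain ⟨x, hx⟩ := z
  match x with
  | Sum.inl v => exact ⟨v, rfl⟩
  | Sum.inr p => exact absurd hx (subI_ne G p)

lemma liftD_mkV (ψ : SubV G → ℤ) (v : SubV G) : liftD G ψ (mkV G v) = ψ v := rfl

/-- difference of `ψ` along a potential half-edge -/
def hdiff (ψ : SubV G → ℤ) (q : G.X × ℕ) : ℤ := ψ (rt0 G q) - ψ (far0 G q)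

lemma subR_inr (p : SubH G) : subR G (Sum.inr p) = Sum.inl (rt0 G p.val) := by
  obtain ⟨⟨x, k⟩, hx, hk⟩ := p
  by_cases h0 : k = 0
  · subst h0
    simp [subR, rt0]
  · show (if h : k = 0 then _ else _) = _
    rw [dif_neg h0]
    unfold rt0
    rw [dif_pos (show ((x,k).2 ≠ 0 ∧ G.IsHalfEdge (x,k).1 ∧ (x,k).2 < G.l (x,k).1) from ⟨h0, hx, hk⟩)]

lemma not_halfedge_inl (u : SubV G) : ¬ (Subdiv G).IsHalfEdge (Sum.inl u) := fun h => h rfl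

lemma halfedge_inr (p : SubH G) : (Subdiv G).IsHalfEdge (Sum.inr p) := subI_ne G p

lemma subdivDvb (φ : (Subdiv G).V → ℤ) : (Subdiv G).Dvb φ := by
  intro x hx
  match x with
  | Sum.inl u => exact absurd rfl hx
  | Sum.inr p =>
    show ((1:ℕ) : ℤ) ∣ _
    simp

/-- Master formula for the Laplacian on the subdivision. -/
lemma ILap_subdiv (ψ : SubV G → ℤ) (v : SubV G) :
    (Subdiv G).ILap (liftD G ψ) (mkV G v)
      = ∑ p : SubH G, if rt0 G p.val = v then hdiff G ψ p.val else 0 := by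
  unfold ILap
  have huniv : (Finset.univ : Finset ((Subdiv G).X)) = (Finset.univ : Finset (SubV G ⊕ SubH G)) := by
    congr 1
    exact Subsingleton.elim _ _
  have hstep : (∑ x : (Subdiv G).X, if (Subdiv G).IsHalfEdge x ∧ (Subdiv G).r x = (mkV G v).val
          then (Subdiv G).dsl (liftD G ψ) x else 0)
      = ∑ x : SubV G ⊕ SubH G, (fun x => if (Subdiv G).IsHalfEdge x ∧ (Subdiv G).r x = (mkV G v).val
          then (Subdiv G).dsl (liftD G ψ) x else 0) x :=
    Finset.sum_congr huniv (fun x _ => rfl)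
  rw [hstep, Fintype.sum_sum_type]
  have hleft : ∀ u : SubV G,
      (if (Subdiv G).IsHalfEdge (Sum.inl u) ∧ (Subdiv G).r (Sum.inl u) = (mkV G v).val
        then (Subdiv G).dsl (liftD G ψ) (Sum.inl u) else 0) = 0 := by
    intro u
    rw [if_neg]
    rintro ⟨h, -⟩
    exact not_halfedge_inl G u h
  rw [Finset.sum_congr rfl (fun u _ => hleft u), Finset.sum_const_zero, zero_add]
  apply Finset.sum_congr rfl
  intro p _
  have hcond : ((Subdiv G).IsHalfEdge (Sum.inr p) ∧ (Subdiv G).r (Sum.inr p) = (mkV G v).val)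
      ↔ rt0 G p.val = v := by
    constructor
    · rintro ⟨-, h⟩
      have : subR G (Sum.inr p) = Sum.inl v := h
      rw [subR_inr] at this
      exact Sum.inl.inj this
    · intro h
      refine ⟨halfedge_inr G p, ?_⟩
      show subR G (Sum.inr p) = Sum.inl v
      rw [subR_inr, h]
  have hval : (Subdiv G).dsl (liftD G ψ) (Sum.inr p) = hdiff G ψ p.val := by
    unfold dsl hdiff
    have h1 : liftD G ψ ((Subdiv G).rv (Sum.inr p)) = ψ (rt0 G p.val) := by
      show Sum.elim ψ (fun _ => 0) (subR G (Sum.inr p)) = _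
      rw [subR_inr]
      rfl
    have h2 : liftD G ψ ((Subdiv G).rv ((Subdiv G).i (Sum.inr p))) = ψ (far0 G p.val) := by
      show Sum.elim ψ (fun _ => 0) (subR G (subI G (Sum.inr p))) = _
      have : subI G (Sum.inr p) = Sum.inr (⟨(G.i p.val.1, G.l p.val.1 - 1 - p.val.2), by
        refine ⟨?_, ?_⟩
        · show G.i (G.i p.val.1) ≠ G.i p.val.1
          rw [G.i_invol]
          exact fun hx => p.property.1 hx.symm
        · show G.l p.val.1 - 1 - p.val.2 < G.l (G.i p.val.1)
          rw [G.l_i]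
          have h0 : G.l p.val.1 ≠ 0 := fun h => p.property.1 ((G.l_zero_iff p.val.1).mp h)
          omega⟩ : SubH G) := rfl
      erw [this, subR_inr]
      rfl
    rw [h1, h2]
    show _ / ((1:ℕ) : ℤ) = _
    simp
  by_cases h : rt0 G p.val = v
  · rw [if_pos (hcond.mpr h), if_pos h, hval]
  · rw [if_neg (fun hc => h (hcond.mp hc)), if_neg h]

/-- reindexing vertices of the subdivision -/
def eSV : SubV G ≃ (Subdiv G).V where
  toFun := mkV G
  invFun := fun z => match z with
    | ⟨Sum.inl v, _⟩ => v
    | ⟨Sum.inr p, h⟩ => absurd h (subI_ne G p)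
  left_inv := fun v => rfl
  right_inv := by
    intro z
    obtain ⟨v, rfl⟩ := vert_cases G z
    rfl

lemma degD_liftD (D : G.V → ℤ) :
    (Subdiv G).degD (liftD G (Sum.elim D (fun _ => 0))) = G.degD D := by
  unfold degD
  rw [← Equiv.sum_comp (eSV G) (liftD G (Sum.elim D (fun _ => 0)))]
  have : ∀ v : SubV G, liftD G (Sum.elim D (fun _ => 0)) (eSV G v) = Sum.elim D (fun _ => 0) v :=
    fun v => rfl
  rw [Finset.sum_congr rfl (fun v _ => this v), Fintype.sum_sum_type]
  simp

end MGraph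


namespace MGraph

variable (G : MGraph ℕ)

lemma ordx_inj : Function.Injective (ordx G) := fun a b h =>
  (Fintype.equivFin G.X).injective (Fin.val_injective h)

variable {G}

lemma ord_ne {e : G.X} (he : G.IsHalfEdge e) : ordx G e ≠ ordx G (G.i e) :=
  fun h => he ((ordx_inj G h).symm)

lemma ivtx_i {e : G.X} (he : G.IsHalfEdge e) {j : ℕ} (hj : 0 < j) (hj' : j < G.l e) :
    ivtx G (G.i e) (halfedge_i he) (G.l e - j)
      (by omega) (by rw [G.l_i]; omega) = ivtx G e he j hj hj' := by
  unfold ivtx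
  by_cases h : ordx G e ≤ ordx G (G.i e)
  · erw [dif_pos h, dif_neg (by rw [G.i_invol]; exact fun h' => ord_ne he (le_antisymm h h'))]
    apply Subtype.ext
    show (G.i (G.i e), G.l (G.i e) - (G.l e - j)) = (e, j)
    rw [G.i_invol, G.l_i]
    exact Prod.ext rfl (by omega)
  · erw [dif_neg h, dif_pos (by rw [G.i_invol]; omega)]

lemma ivtx_self (q : IntVert G) :
    ivtx G q.val.1 q.property.1 q.val.2 q.property.2.1 q.property.2.2.1 = q := by
  unfold ivtx
  erw [dif_pos q.property.2.2.2]
  exact Subtype.ext rfl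

lemma ivtx_eq_iff {x e : G.X} {k j : ℕ} (hx : G.IsHalfEdge x) (hk : 0 < k) (hk' : k < G.l x)
    (he : G.IsHalfEdge e) (hj : 0 < j) (hj' : j < G.l e) :
    ivtx G x hx k hk hk' = ivtx G e he j hj hj'
      ↔ ((x, k) = (e, j) ∨ (x, k) = (G.i e, G.l e - j)) := by
  constructor
  · intro h
    unfold ivtx at h
    by_cases h1 : ordx G x ≤ ordx G (G.i x) <;> by_cases h2 : ordx G e ≤ ordx G (G.i e)
    · erw [dif_pos h1, dif_pos h2] at h
      left; exact congrArg Subtype.val h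
    · erw [dif_pos h1, dif_neg h2] at h
      right; exact congrArg Subtype.val h
    · erw [dif_neg h1, dif_pos h2] at h
      have h' : (G.i x, G.l x - k) = (e, j) := congrArg Subtype.val h
      have hx1 : G.i x = e := congrArg Prod.fst h'
      have hk1 : G.l x - k = j := congrArg Prod.snd h'
      have hxe : x = G.i e := by rw [← hx1, G.i_invol]
      have hl : G.l x = G.l e := by rw [hxe, G.l_i]
      right
      refine Prod.ext hxe ?_
      show k = G.l e - j
      omega
    · erw [dif_neg h1, dif_neg h2] at h
      have h' : (G.i x, G.l x - k) = (G.i e, G.l e - j) := congrArg Subtype.val h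
      have hx1 : G.i x = G.i e := congrArg Prod.fst h'
      have hk1 : G.l x - k = G.l e - j := congrArg Prod.snd h'
      have hxe : x = e := by rw [← G.i_invol x, hx1, G.i_invol]
      have hl : G.l x = G.l e := by rw [hxe]
      left
      refine Prod.ext hxe ?_
      show k = j
      omega
  · rintro (h | h)
    · have hx1 : x = e := congrArg Prod.fst h
      have hk1 : k = j := congrArg Prod.snd h
      subst hx1; subst hk1
      rfl
    · have hx1 : x = G.i e := congrArg Prod.fst h
      have hk1 : k = G.l e - j := congrArg Prod.snd h
      subst hx1; subst hk1
      exact ivtx_i he hj hj'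

lemma rt0_eq_inl (p : SubH G) (v₀ : G.V) :
    rt0 G p.val = Sum.inl v₀ ↔ p.val.2 = 0 ∧ G.rv p.val.1 = v₀ := by
  obtain ⟨⟨x, k⟩, hx, hk⟩ := p
  unfold rt0
  by_cases h0 : k = 0
  · subst h0
    rw [dif_neg (by simp)]
    simp
  · rw [dif_pos (show ((x,k).2 ≠ 0 ∧ G.IsHalfEdge (x,k).1 ∧ (x,k).2 < G.l (x,k).1) from ⟨h0, hx, hk⟩)]
    constructor
    · intro h; exact absurd h (by simp)
    · rintro ⟨h, -⟩; exact absurd h h0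

lemma rt0_eq_inr (p : SubH G) {e : G.X} (he : G.IsHalfEdge e) {j : ℕ} (hj : 0 < j)
    (hj' : j < G.l e) :
    rt0 G p.val = Sum.inr (ivtx G e he j hj hj')
      ↔ (p.val = (e, j) ∨ p.val = (G.i e, G.l e - j)) := by
  obtain ⟨⟨x, k⟩, hx, hk⟩ := p
  unfold rt0
  by_cases h0 : k = 0
  · subst h0
    rw [dif_neg (by simp)]
    constructor
    · intro h; exact absurd h (by simp)
    · rintro (h | h)
      · have : (0:ℕ) = j := congrArg Prod.snd h
        omega
      · have : (0:ℕ) = G.l e - j := congrArg Prod.snd h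
        omega
  · rw [dif_pos (show ((x,k).2 ≠ 0 ∧ G.IsHalfEdge (x,k).1 ∧ (x,k).2 < G.l (x,k).1) from ⟨h0, hx, hk⟩)]
    rw [Sum.inr.injEq]
    exact ivtx_eq_iff hx (Nat.pos_of_ne_zero h0) hk he hj hj'

/-- Summation over half-edges of the subdivision rooted at an old vertex. -/
lemma sum_rt0_inl (v₀ : G.V) (F : G.X × ℕ → ℤ) :
    (∑ p : SubH G, if rt0 G p.val = Sum.inl v₀ then F p.val else 0)
      = ∑ x : G.X, if G.IsHalfEdge x ∧ G.rv x = v₀ then F (x, 0) else 0 := by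
  rw [← Finset.sum_filter, ← Finset.sum_filter]
  refine Finset.sum_bij' (i := fun p _ => p.val.1) (j := fun x hx =>
    ⟨(x, 0), (Finset.mem_filter.mp hx).2.1, l_pos (Finset.mem_filter.mp hx).2.1⟩)
    ?_ ?_ ?_ ?_ ?_
  · intro p hp
    have h := (Finset.mem_filter.mp hp).2
    rw [rt0_eq_inl] at h
    exact Finset.mem_filter.mpr ⟨Finset.mem_univ _, p.property.1, h.2⟩
  · intro x hx
    apply Finset.mem_filter.mpr
    refine ⟨Finset.mem_univ _, ?_⟩
    erw [rt0_eq_inl]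
    exact ⟨rfl, (Finset.mem_filter.mp hx).2.2⟩
  · intro p hp
    have h := (Finset.mem_filter.mp hp).2
    rw [rt0_eq_inl] at h
    apply Subtype.ext
    exact Prod.ext rfl h.1.symm
  · intro x hx
    rfl
  · intro p hp
    have h := (Finset.mem_filter.mp hp).2
    rw [rt0_eq_inl] at h
    have : p.val = (p.val.1, 0) := Prod.ext rfl h.1
    rw [← this]

/-- Summation over half-edges of the subdivision rooted at an interior vertex. -/
lemma sum_rt0_inr {e : G.X} (he : G.IsHalfEdge e) {j : ℕ} (hj : 0 < j) (hj' : j < G.l e)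
    (F : G.X × ℕ → ℤ) :
    (∑ p : SubH G, if rt0 G p.val = Sum.inr (ivtx G e he j hj hj') then F p.val else 0)
      = F (e, j) + F (G.i e, G.l e - j) := by
  rw [← Finset.sum_filter]
  have hp1 : ((e, j) : G.X × ℕ).2 < G.l (e, j).1 := hj'
  have hp2 : ((G.i e, G.l e - j) : G.X × ℕ).2 < G.l (G.i e, G.l e - j).1 := by
    show G.l e - j < G.l (G.i e); rw [G.l_i]; omega
  set p1 : SubH G := ⟨(e, j), he, hp1⟩ with hp1def
  set p2 : SubH G := ⟨(G.i e, G.l e - j), halfedge_i he, hp2⟩ with hp2def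
  have hne : p1 ≠ p2 := by
    intro h
    have h' : (e : G.X) = G.i e := congrArg (fun q => q.val.1) h
    exact he h'.symm
  have hfilter : Finset.univ.filter (fun p : SubH G => rt0 G p.val = Sum.inr (ivtx G e he j hj hj'))
      = {p1, p2} := by
    ext p
    rw [Finset.mem_filter, Finset.mem_insert, Finset.mem_singleton]
    constructor
    · rintro ⟨-, h⟩
      rw [rt0_eq_inr p he hj hj'] at h
      rcases h with h | h
      · left; exact Subtype.ext h
      · right; exact Subtype.ext h
    · rintro (h | h) <;> subst h
      · refine ⟨Finset.mem_univ _, ?_⟩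
        rw [rt0_eq_inr p1 he hj hj']
        left; rfl
      · refine ⟨Finset.mem_univ _, ?_⟩
        rw [rt0_eq_inr p2 he hj hj']
        right; rfl
  rw [hfilter, Finset.sum_pair hne]

end MGraph


namespace MGraph

variable {G : MGraph ℕ}

/-- the point at distance `t` from `r e` along the subdivided edge `e` -/
def pt (e : G.X) (he : G.IsHalfEdge e) (t : ℕ) : SubV G :=
  if h : 0 < t ∧ t < G.l e then Sum.inr (ivtx G e he t h.1 h.2)
  else if t = 0 then Sum.inl (G.rv e) else Sum.inl (G.rv (G.i e))

lemma pt_zero (e : G.X) (he : G.IsHalfEdge e) : pt e he 0 = Sum.inl (G.rv e) := by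
  unfold pt
  rw [dif_neg (by omega), if_pos rfl]

lemma pt_top (e : G.X) (he : G.IsHalfEdge e) : pt e he (G.l e) = Sum.inl (G.rv (G.i e)) := by
  have := l_pos he
  unfold pt
  rw [dif_neg (by omega), if_neg (by omega)]

lemma pt_mid (e : G.X) (he : G.IsHalfEdge e) {t : ℕ} (h1 : 0 < t) (h2 : t < G.l e) :
    pt e he t = Sum.inr (ivtx G e he t h1 h2) := by
  unfold pt
  rw [dif_pos ⟨h1, h2⟩]

lemma rt0_seg (e : G.X) (he : G.IsHalfEdge e) {k : ℕ} (hk : k < G.l e) :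
    rt0 G (e, k) = pt e he k := by
  unfold rt0
  by_cases h0 : k = 0
  · subst h0
    rw [dif_neg (by simp), pt_zero]
  · rw [dif_pos (show ((e,k).2 ≠ 0 ∧ G.IsHalfEdge (e,k).1 ∧ (e,k).2 < G.l (e,k).1) from ⟨h0, he, hk⟩),
      pt_mid e he (Nat.pos_of_ne_zero h0) hk]

lemma far0_seg (e : G.X) (he : G.IsHalfEdge e) {k : ℕ} (hk : k < G.l e) :
    far0 G (e, k) = pt e he (k + 1) := by
  unfold far0
  show rt0 G (G.i e, G.l e - 1 - k) = _
  by_cases htop : k = G.l e - 1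
  · subst htop
    have : G.l e - 1 - (G.l e - 1) = 0 := by omega
    rw [this]
    unfold rt0
    rw [dif_neg (by simp)]
    have hle : G.l e - 1 + 1 = G.l e := by have := l_pos he; omega
    rw [hle, pt_top]
  · have h1 : G.l e - 1 - k ≠ 0 := by omega
    have h2 : G.l e - 1 - k < G.l (G.i e) := by rw [G.l_i]; omega
    unfold rt0
    rw [dif_pos (show ((G.i e, G.l e - 1 - k).2 ≠ 0 ∧ G.IsHalfEdge (G.i e, G.l e - 1 - k).1
      ∧ (G.i e, G.l e - 1 - k).2 < G.l (G.i e, G.l e - 1 - k).1) from ⟨h1, halfedge_i he, h2⟩)]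
    have hk1 : 0 < k + 1 := by omega
    have hk2 : k + 1 < G.l e := by omega
    rw [pt_mid e he hk1 hk2]
    exact congrArg Sum.inr ((ivtx_eq_iff (halfedge_i he) (Nat.pos_of_ne_zero h1) h2 he hk1 hk2).mpr
      (Or.inr (Prod.ext rfl (by show G.l e - 1 - k = G.l e - (k+1); omega))))

lemma rt0_seg' (e : G.X) (he : G.IsHalfEdge e) {k : ℕ} (hk : k < G.l e) :
    rt0 G (G.i e, k) = pt e he (G.l e - k) := by
  unfold rt0
  by_cases h0 : k = 0
  · subst h0
    rw [dif_neg (by simp), Nat.sub_zero, pt_top]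
  · have h2 : k < G.l (G.i e) := by rw [G.l_i]; omega
    rw [dif_pos (show ((G.i e, k).2 ≠ 0 ∧ G.IsHalfEdge (G.i e, k).1
      ∧ (G.i e, k).2 < G.l (G.i e, k).1) from ⟨h0, halfedge_i he, h2⟩)]
    have hk1 : 0 < G.l e - k := by omega
    have hk2 : G.l e - k < G.l e := by omega
    rw [pt_mid e he hk1 hk2]
    exact congrArg Sum.inr ((ivtx_eq_iff (halfedge_i he) (Nat.pos_of_ne_zero h0) h2 he hk1 hk2).mpr
      (Or.inr (Prod.ext rfl (by show k = G.l e - (G.l e - k); omega))))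

lemma far0_seg' (e : G.X) (he : G.IsHalfEdge e) {k : ℕ} (hk : k < G.l e) :
    far0 G (G.i e, k) = pt e he (G.l e - 1 - k) := by
  unfold far0
  show rt0 G (G.i (G.i e), G.l (G.i e) - 1 - k) = _
  rw [G.i_invol, G.l_i]
  exact rt0_seg e he (by omega)

variable (G) in
/-- linear extension of an integer-valued function on the vertices of `G` to the
vertices of the subdivision -/
def extf (φ : G.V → ℤ) : SubV G → ℤ := fun v =>
  match v with
  | Sum.inl u => φ u
  | Sum.inr q => φ (G.rv q.val.1) - (q.val.2 : ℤ) * G.dsl φ q.val.1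

lemma extf_rv_i {φ : G.V → ℤ} (hφ : G.Dvb φ) {e : G.X} (he : G.IsHalfEdge e) :
    φ (G.rv (G.i e)) = φ (G.rv e) - (G.l e : ℤ) * G.dsl φ e := by
  have := dsl_mul hφ he
  linarith

lemma extf_pt {φ : G.V → ℤ} (hφ : G.Dvb φ) {e : G.X} (he : G.IsHalfEdge e) {t : ℕ}
    (ht : t ≤ G.l e) :
    extf G φ (pt e he t) = φ (G.rv e) - (t : ℤ) * G.dsl φ e := by
  by_cases h1 : 0 < t ∧ t < G.l e
  · rw [pt_mid e he h1.1 h1.2]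
    show extf G φ (Sum.inr (ivtx G e he t h1.1 h1.2)) = _
    unfold ivtx
    by_cases hord : ordx G e ≤ ordx G (G.i e)
    · erw [dif_pos hord]
      rfl
    · erw [dif_neg hord]
      show φ (G.rv (G.i e)) - ((G.l e - t : ℕ) : ℤ) * G.dsl φ (G.i e) = _
      rw [dsl_i hφ he, extf_rv_i hφ he]
      have hc : ((G.l e - t : ℕ) : ℤ) = (G.l e : ℤ) - t := by
        have : t ≤ G.l e := le_of_lt h1.2
        push_cast [Nat.cast_sub this]
        ring
      rw [hc]
      ring
  · rcases Nat.eq_zero_or_pos t with h0 | hpos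
    · subst h0
      rw [pt_zero]
      show φ (G.rv e) = _
      push_cast
      ring
    · have htop : t = G.l e := by omega
      subst htop
      rw [pt_top]
      show φ (G.rv (G.i e)) = _
      rw [extf_rv_i hφ he]

lemma hdiff_extf {φ : G.V → ℤ} (hφ : G.Dvb φ) (p : SubH G) :
    hdiff G (extf G φ) p.val = G.dsl φ p.val.1 := by
  obtain ⟨⟨x, k⟩, hx, hk⟩ := p
  show hdiff G (extf G φ) (x, k) = G.dsl φ x
  unfold hdiff
  rw [rt0_seg x hx hk, far0_seg x hx hk, extf_pt hφ hx (by omega), extf_pt hφ hx (by omega)]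
  push_cast
  ring

end MGraph


namespace MGraph

variable {G : MGraph ℕ}

lemma rv_eq_iff (x : G.X) (v₀ : G.V) : G.rv x = v₀ ↔ G.r x = v₀.val := by
  constructor
  · intro h; rw [← h]; rfl
  · intro h; exact Subtype.ext h

lemma ILap_eq_sum_rv (φ : G.V → ℤ) (v₀ : G.V) :
    G.ILap φ v₀ = ∑ x : G.X, if G.IsHalfEdge x ∧ G.rv x = v₀ then G.dsl φ x else 0 := by
  unfold ILap
  apply Finset.sum_congr rfl
  intro x _
  refine if_congr (and_congr_right fun _ => ?_) rfl rfl
  exact (rv_eq_iff x v₀).symm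

lemma ILap_extf_old {φ : G.V → ℤ} (hφ : G.Dvb φ) (v₀ : G.V) :
    (Subdiv G).ILap (liftD G (extf G φ)) (mkV G (Sum.inl v₀)) = G.ILap φ v₀ := by
  rw [ILap_subdiv, sum_rt0_inl v₀ (fun q => hdiff G (extf G φ) q), ILap_eq_sum_rv]
  apply Finset.sum_congr rfl
  intro x _
  by_cases h : G.IsHalfEdge x ∧ G.rv x = v₀
  · rw [if_pos h, if_pos h]
    exact hdiff_extf hφ ⟨(x, 0), h.1, l_pos h.1⟩
  · rw [if_neg h, if_neg h]

lemma ILap_extf_int {φ : G.V → ℤ} (hφ : G.Dvb φ) {e : G.X} (he : G.IsHalfEdge e) {j : ℕ}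
    (hj : 0 < j) (hj' : j < G.l e) :
    (Subdiv G).ILap (liftD G (extf G φ)) (mkV G (Sum.inr (ivtx G e he j hj hj'))) = 0 := by
  rw [ILap_subdiv, sum_rt0_inr he hj hj' (fun q => hdiff G (extf G φ) q)]
  have h1 : hdiff G (extf G φ) (e, j) = G.dsl φ e := hdiff_extf hφ ⟨(e, j), he, hj'⟩
  have h2 : hdiff G (extf G φ) (G.i e, G.l e - j) = G.dsl φ (G.i e) :=
    hdiff_extf hφ ⟨(G.i e, G.l e - j), halfedge_i he, by rw [G.l_i]; omega⟩
  rw [h1, h2, dsl_i hφ he]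
  ring

lemma ILap_liftD_sub (ψ₁ ψ₂ : SubV G → ℤ) (v : SubV G) :
    (Subdiv G).ILap (liftD G (fun u => ψ₁ u - ψ₂ u)) (mkV G v)
      = (Subdiv G).ILap (liftD G ψ₁) (mkV G v) - (Subdiv G).ILap (liftD G ψ₂) (mkV G v) := by
  rw [ILap_subdiv, ILap_subdiv, ILap_subdiv, ← Finset.sum_sub_distrib]
  apply Finset.sum_congr rfl
  intro p _
  by_cases h : rt0 G p.val = v
  · simp only [if_pos h]; unfold hdiff; ring
  · simp only [if_neg h]; ring

lemma ILap_liftD_shift (ψ : SubV G → ℤ) (c : ℤ) (v : SubV G) :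
    (Subdiv G).ILap (liftD G (fun u => ψ u + c)) (mkV G v)
      = (Subdiv G).ILap (liftD G ψ) (mkV G v) := by
  rw [ILap_subdiv, ILap_subdiv]
  apply Finset.sum_congr rfl
  intro p _
  by_cases h : rt0 G p.val = v
  · simp only [if_pos h]; unfold hdiff; ring
  · simp only [if_neg h]

lemma ILap_liftD_max_le (ψ₁ ψ₂ : SubV G → ℤ) (v : SubV G) (hv : ψ₂ v ≤ ψ₁ v) :
    (Subdiv G).ILap (liftD G (fun u => max (ψ₁ u) (ψ₂ u))) (mkV G v)
      ≤ (Subdiv G).ILap (liftD G ψ₁) (mkV G v) := by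
  rw [ILap_subdiv, ILap_subdiv]
  apply Finset.sum_le_sum
  intro p _
  by_cases h : rt0 G p.val = v
  · rw [if_pos h, if_pos h]
    unfold hdiff
    rw [h]
    dsimp only
    omega
  · rw [if_neg h, if_neg h]

/-- the tent function -/
def tentf (m L t : ℤ) : ℤ := min t (min m (L - t))

variable (G) in
/-- the trapezoid function supported on the interior of the subdivided edge `e`,
with plateau from `min j (l e - j)` to `l e - min j (l e - j)` -/
def tau (e : G.X) (j : ℕ) : SubV G → ℤ := fun v =>
  match v with
  | Sum.inl _ => 0
  | Sum.inr q =>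
      if q.val.1 = e then
        tentf (min (j:ℤ) ((G.l e : ℤ) - j)) (G.l e) (q.val.2 : ℤ)
      else if q.val.1 = G.i e then
        tentf (min (j:ℤ) ((G.l e : ℤ) - j)) (G.l e) ((G.l e : ℤ) - (q.val.2 : ℤ))
      else 0

lemma tau_pt {e : G.X} (he : G.IsHalfEdge e) (hord : ordx G e ≤ ordx G (G.i e))
    (j : ℕ) {t : ℕ} (ht : t ≤ G.l e) (hj : 0 < j) (hj' : j < G.l e) :
    tau G e j (pt e he t) = tentf (min (j:ℤ) ((G.l e : ℤ) - j)) (G.l e) (t : ℤ) := by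
  by_cases h1 : 0 < t ∧ t < G.l e
  · rw [pt_mid e he h1.1 h1.2]
    show tau G e j (Sum.inr (ivtx G e he t h1.1 h1.2)) = _
    unfold ivtx
    erw [dif_pos hord]
    show (if e = e then _ else _) = _
    rw [if_pos rfl]
  · rcases Nat.eq_zero_or_pos t with h0 | hpos
    · subst h0
      rw [pt_zero]
      show (0:ℤ) = _
      unfold tentf
      omega
    · have htop : t = G.l e := by omega
      subst htop
      rw [pt_top]
      show (0:ℤ) = _
      unfold tentf
      omega

lemma i_eq_iff {a b : G.X} : G.i a = b ↔ a = G.i b := by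
  constructor
  · intro h; rw [← h, G.i_invol]
  · intro h; rw [h, G.i_invol]

lemma tau_pt0 {e e' : G.X} (he' : G.IsHalfEdge e') (h1 : e' ≠ e) (h2 : e' ≠ G.i e)
    (j : ℕ) {t : ℕ} (ht : t ≤ G.l e') :
    tau G e j (pt e' he' t) = 0 := by
  by_cases hm : 0 < t ∧ t < G.l e'
  · rw [pt_mid e' he' hm.1 hm.2]
    show tau G e j (Sum.inr (ivtx G e' he' t hm.1 hm.2)) = 0
    have h3 : G.i e' ≠ e := fun h => h2 (by rw [i_eq_iff] at h; exact h)
    have h4 : G.i e' ≠ G.i e := fun h => h1 (by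
      have := congrArg G.i h
      rwa [G.i_invol, G.i_invol] at this)
    unfold ivtx
    by_cases hord : ordx G e' ≤ ordx G (G.i e')
    · erw [dif_pos hord]
      show (if e' = e then _ else if e' = G.i e then _ else (0:ℤ)) = 0
      rw [if_neg h1, if_neg h2]
    · erw [dif_neg hord]
      show (if G.i e' = e then _ else if G.i e' = G.i e then _ else (0:ℤ)) = 0
      rw [if_neg h3, if_neg h4]
  · rcases Nat.eq_zero_or_pos t with h0 | hpos
    · subst h0; rw [pt_zero]; rfl
    · have : t = G.l e' := by omega
      subst this; rw [pt_top]; rfl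

lemma ILap_tau_old {e : G.X} (he : G.IsHalfEdge e) (hord : ordx G e ≤ ordx G (G.i e))
    {j : ℕ} (hj : 0 < j) (hj' : j < G.l e) (v₀ : G.V) :
    (Subdiv G).ILap (liftD G (tau G e j)) (mkV G (Sum.inl v₀))
      = (if G.rv e = v₀ then (-1:ℤ) else 0) + (if G.rv (G.i e) = v₀ then (-1:ℤ) else 0) := by
  have hL2 : 2 ≤ G.l e := by omega
  rw [ILap_subdiv, sum_rt0_inl v₀ (fun q => hdiff G (tau G e j) q)]
  have hee : ¬ (e = G.i e) := fun h => he h.symm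
  have hval : ∀ x, G.IsHalfEdge x →
      hdiff G (tau G e j) (x, 0) = if x = e ∨ x = G.i e then (-1:ℤ) else 0 := by
    intro x hx
    unfold hdiff
    by_cases hxe : x = e
    · subst hxe
      rw [rt0_seg x hx (l_pos hx), far0_seg x hx (l_pos hx)]
      rw [tau_pt hx hord j (by omega) hj hj', tau_pt hx hord j (by omega) hj hj']
      rw [if_pos (Or.inl rfl)]
      unfold tentf
      push_cast
      omega
    · by_cases hxi : x = G.i e
      · subst hxi
        have h0 : (0:ℕ) < G.l e := by omega
        rw [show ((G.i e, 0) : G.X × ℕ) = (G.i e, 0) from rfl]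
        rw [rt0_seg' e he (k := 0) h0, far0_seg' e he (k := 0) h0]
        rw [Nat.sub_zero]
        rw [tau_pt he hord j (le_refl _) hj hj', tau_pt he hord j (by omega) hj hj']
        rw [if_pos (Or.inr rfl)]
        unfold tentf
        have hc : ((G.l e - 1 - 0 : ℕ) : ℤ) = (G.l e : ℤ) - 1 := by omega
        rw [hc]
        omega
      · rw [rt0_seg x hx (l_pos hx), far0_seg x hx (l_pos hx)]
        rw [tau_pt0 hx hxe hxi j (by omega), tau_pt0 hx hxe hxi j (l_pos hx)]
        rw [if_neg (by tauto)]
        ring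
  have hsplit : ∀ x : G.X, (if G.IsHalfEdge x ∧ G.rv x = v₀ then hdiff G (tau G e j) (x, 0) else 0)
      = (if x = e then (if G.rv e = v₀ then (-1:ℤ) else 0) else 0)
        + (if x = G.i e then (if G.rv (G.i e) = v₀ then (-1:ℤ) else 0) else 0) := by
    intro x
    by_cases hxe : x = e
    · subst hxe
      rw [if_pos rfl, if_neg hee]
      by_cases hrv : G.rv x = v₀
      · rw [if_pos ⟨he, hrv⟩, hval x he, if_pos (Or.inl rfl), if_pos hrv]
        ring
      · rw [if_neg (fun hc => hrv hc.2), if_neg hrv]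
        ring
    · by_cases hxi : x = G.i e
      · subst hxi
        rw [if_neg hxe, if_pos rfl]
        have hxh : G.IsHalfEdge (G.i e) := halfedge_i he
        by_cases hrv : G.rv (G.i e) = v₀
        · rw [if_pos ⟨hxh, hrv⟩, hval _ hxh, if_pos (Or.inr rfl), if_pos hrv]
          ring
        · rw [if_neg (fun hc => hrv hc.2), if_neg hrv]
          ring
      · rw [if_neg hxe, if_neg hxi]
        by_cases hc : G.IsHalfEdge x ∧ G.rv x = v₀
        · rw [if_pos hc, hval x hc.1, if_neg (by tauto)]
          ring
        · rw [if_neg hc]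
          ring
  rw [Finset.sum_congr rfl (fun x _ => hsplit x), Finset.sum_add_distrib]
  rw [Finset.sum_ite_eq' Finset.univ e (fun _ => if G.rv e = v₀ then (-1:ℤ) else 0)]
  rw [Finset.sum_ite_eq' Finset.univ (G.i e) (fun _ => if G.rv (G.i e) = v₀ then (-1:ℤ) else 0)]
  simp

lemma ILap_tau_int_same {e : G.X} (he : G.IsHalfEdge e) (hord : ordx G e ≤ ordx G (G.i e))
    {j j' : ℕ} (hj : 0 < j) (hj' : j < G.l e) (hj1 : 0 < j') (hj2 : j' < G.l e) :
    (Subdiv G).ILap (liftD G (tau G e j)) (mkV G (Sum.inr (ivtx G e he j' hj1 hj2)))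
      = 2 * tentf (min (j:ℤ) ((G.l e : ℤ) - j)) (G.l e) (j' : ℤ)
        - tentf (min (j:ℤ) ((G.l e : ℤ) - j)) (G.l e) ((j' : ℤ) + 1)
        - tentf (min (j:ℤ) ((G.l e : ℤ) - j)) (G.l e) ((j' : ℤ) - 1) := by
  rw [ILap_subdiv, sum_rt0_inr he hj1 hj2 (fun q => hdiff G (tau G e j) q)]
  unfold hdiff
  have hk2 : G.l e - j' < G.l e := by omega
  rw [rt0_seg e he hj2, far0_seg e he hj2, rt0_seg' e he hk2, far0_seg' e he hk2]
  have e1 : G.l e - (G.l e - j') = j' := by omega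
  have e2 : G.l e - 1 - (G.l e - j') = j' - 1 := by omega
  rw [e1, e2]
  rw [tau_pt he hord j (by omega) hj hj', tau_pt he hord j (by omega) hj hj',
    tau_pt he hord j (by omega) hj hj']
  have c1 : ((j' + 1 : ℕ) : ℤ) = (j' : ℤ) + 1 := by omega
  have c2 : ((j' - 1 : ℕ) : ℤ) = (j' : ℤ) - 1 := by omega
  rw [c1, c2]
  ring

lemma ILap_tau_int_other {e e' : G.X} (he' : G.IsHalfEdge e') (h1 : e' ≠ e) (h2 : e' ≠ G.i e)
    (j : ℕ) {j' : ℕ} (hj1 : 0 < j') (hj2 : j' < G.l e') :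
    (Subdiv G).ILap (liftD G (tau G e j)) (mkV G (Sum.inr (ivtx G e' he' j' hj1 hj2))) = 0 := by
  rw [ILap_subdiv, sum_rt0_inr he' hj1 hj2 (fun q => hdiff G (tau G e j) q)]
  unfold hdiff
  have hk2 : G.l e' - j' < G.l e' := by omega
  rw [rt0_seg e' he' hj2, far0_seg e' he' hj2, rt0_seg' e' he' hk2, far0_seg' e' he' hk2]
  rw [tau_pt0 he' h1 h2 j (by omega), tau_pt0 he' h1 h2 j (by omega),
    tau_pt0 he' h1 h2 j (by omega), tau_pt0 he' h1 h2 j (by omega)]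
  ring

lemma ILap_max_int (φ₁ φ₂ : G.V → ℤ) (hφ₁ : G.Dvb φ₁) (hφ₂ : G.Dvb φ₂) (c₁ c₂ : ℤ)
    {e' : G.X} (he' : G.IsHalfEdge e') {j' : ℕ} (hj1 : 0 < j') (hj2 : j' < G.l e') :
    (Subdiv G).ILap (liftD G (fun u => max (extf G φ₁ u + c₁) (extf G φ₂ u + c₂)))
        (mkV G (Sum.inr (ivtx G e' he' j' hj1 hj2)))
      = 2 * max (φ₁ (G.rv e') + c₁ - (j' : ℤ) * G.dsl φ₁ e')
              (φ₂ (G.rv e') + c₂ - (j' : ℤ) * G.dsl φ₂ e')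
        - max (φ₁ (G.rv e') + c₁ - (j' : ℤ) * G.dsl φ₁ e' - G.dsl φ₁ e')
              (φ₂ (G.rv e') + c₂ - (j' : ℤ) * G.dsl φ₂ e' - G.dsl φ₂ e')
        - max (φ₁ (G.rv e') + c₁ - (j' : ℤ) * G.dsl φ₁ e' + G.dsl φ₁ e')
              (φ₂ (G.rv e') + c₂ - (j' : ℤ) * G.dsl φ₂ e' + G.dsl φ₂ e') := by
  rw [ILap_subdiv, sum_rt0_inr he' hj1 hj2]
  unfold hdiff
  have hk2 : G.l e' - j' < G.l e' := by omega
  rw [rt0_seg e' he' hj2, far0_seg e' he' hj2, rt0_seg' e' he' hk2, far0_seg' e' he' hk2]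
  have e1 : G.l e' - (G.l e' - j') = j' := by omega
  have e2 : G.l e' - 1 - (G.l e' - j') = j' - 1 := by omega
  rw [e1, e2]
  have hv : ∀ t : ℕ, t ≤ G.l e' →
      (fun u => max (extf G φ₁ u + c₁) (extf G φ₂ u + c₂)) (pt e' he' t)
        = max (φ₁ (G.rv e') + c₁ - (t : ℤ) * G.dsl φ₁ e')
            (φ₂ (G.rv e') + c₂ - (t : ℤ) * G.dsl φ₂ e') := by
    intro t ht
    show max (extf G φ₁ (pt e' he' t) + c₁) (extf G φ₂ (pt e' he' t) + c₂) = _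
    rw [extf_pt hφ₁ he' ht, extf_pt hφ₂ he' ht]
    congr 1 <;> ring
  rw [hv j' (by omega), hv (j' + 1) (by omega), hv (j' - 1) (by omega)]
  have c1 : ((j' + 1 : ℕ) : ℤ) = (j' : ℤ) + 1 := by omega
  have c2 : ((j' - 1 : ℕ) : ℤ) = (j' : ℤ) - 1 := by omega
  rw [c1, c2]
  have r1 : φ₁ (G.rv e') + c₁ - ((j' : ℤ) + 1) * G.dsl φ₁ e'
      = φ₁ (G.rv e') + c₁ - (j' : ℤ) * G.dsl φ₁ e' - G.dsl φ₁ e' := by ring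
  have r2 : φ₂ (G.rv e') + c₂ - ((j' : ℤ) + 1) * G.dsl φ₂ e'
      = φ₂ (G.rv e') + c₂ - (j' : ℤ) * G.dsl φ₂ e' - G.dsl φ₂ e' := by ring
  have r3 : φ₁ (G.rv e') + c₁ - ((j' : ℤ) - 1) * G.dsl φ₁ e'
      = φ₁ (G.rv e') + c₁ - (j' : ℤ) * G.dsl φ₁ e' + G.dsl φ₁ e' := by ring
  have r4 : φ₂ (G.rv e') + c₂ - ((j' : ℤ) - 1) * G.dsl φ₂ e'
      = φ₂ (G.rv e') + c₂ - (j' : ℤ) * G.dsl φ₂ e' + G.dsl φ₂ e' := by ring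
  rw [r1, r2, r3, r4]
  ring

end MGraph


namespace MGraph

variable {G : MGraph ℕ}

lemma maxexpr_le (A B s t : ℤ) :
    2 * max A B - max (A - s) (B - t) - max (A + s) (B + t) ≤ 0 := by omega

lemma maxexpr_crossing {A B s t : ℤ} (hAB : A = B) (hst : s ≠ t) :
    2 * max A B - max (A - s) (B - t) - max (A + s) (B + t) ≤ -1 := by
  subst hAB; omega

lemma tent_concave (m L a : ℤ) :
    0 ≤ 2 * tentf m L a - tentf m L (a + 1) - tentf m L (a - 1) := by
  unfold tentf; omega

lemma tent_peak {j L : ℤ} (hj : 0 < j) (hj' : j < L) :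
    1 ≤ 2 * tentf (min j (L - j)) L j - tentf (min j (L - j)) L (j + 1)
      - tentf (min j (L - j)) L (j - 1) := by
  unfold tentf; omega

lemma ILap_liftD_sub' (ψ ψ₁ ψ₂ : SubV G → ℤ) (hψ : ∀ u, ψ u = ψ₁ u - ψ₂ u) (v : SubV G) :
    (Subdiv G).ILap (liftD G ψ) (mkV G v)
      = (Subdiv G).ILap (liftD G ψ₁) (mkV G v) - (Subdiv G).ILap (liftD G ψ₂) (mkV G v) := by
  have h : ψ = fun u => ψ₁ u - ψ₂ u := funext hψ
  rw [h]
  exact ILap_liftD_sub ψ₁ ψ₂ v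

lemma ILap_liftD_max_le' (ψ ψ₁ ψ₂ : SubV G → ℤ) (hψ : ∀ u, ψ u = max (ψ₁ u) (ψ₂ u))
    (v : SubV G) (hv : ψ₂ v ≤ ψ₁ v) :
    (Subdiv G).ILap (liftD G ψ) (mkV G v) ≤ (Subdiv G).ILap (liftD G ψ₁) (mkV G v) := by
  have h : ψ = fun u => max (ψ₁ u) (ψ₂ u) := funext hψ
  rw [h]
  exact ILap_liftD_max_le ψ₁ ψ₂ v hv

lemma isPrincipal_zero (Γ : MGraph ℕ) : Γ.IsPrincipal (fun _ => (0:ℤ)) := by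
  rw [isPrincipal_iff]
  refine ⟨fun _ => 0, fun x hx => by simp, ?_⟩
  funext v
  unfold ILap
  apply Finset.sum_eq_zero
  intro x _
  have h : Γ.dsl (fun _ => (0:ℤ)) x = 0 := by unfold dsl; simp
  rw [h]
  split <;> rfl

/-- Transfer of the rank-one covering property from `G` to its subdivision. -/
lemma covers_subdiv (G : MGraph ℕ)
    (hloopless : ∀ x, G.IsHalfEdge x → G.r x ≠ G.r (G.i x))
    (D : G.V → ℤ)
    (hcov : ∀ F, G.Effective F → G.degD F = 1 →
      ∃ E, G.Effective E ∧ G.IsPrincipal (D - F - E)) :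
    ∀ F', (Subdiv G).Effective F' → (Subdiv G).degD F' = 1 →
      ∃ E', (Subdiv G).Effective E' ∧
        (Subdiv G).IsPrincipal (liftD G (Sum.elim D (fun _ => 0)) - F' - E') := by
  intro F' hF' hdF'
  obtain ⟨w, hw⟩ := eff_deg_one hF' hdF'
  subst hw
  obtain ⟨w₀, rfl⟩ := vert_cases G w
  suffices h : ∃ ψ : SubV G → ℤ, ∀ v : SubV G,
      (Subdiv G).ILap (liftD G ψ) (mkV G v)
        ≤ Sum.elim D (fun _ => 0) v - (if v = w₀ then 1 else 0) by
    obtain ⟨ψ, hψ⟩ := h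
    refine ⟨fun z => liftD G (Sum.elim D (fun _ => 0)) z - (Subdiv G).dirac (mkV G w₀) z
      - (Subdiv G).ILap (liftD G ψ) z, ?_, ?_⟩
    · intro z
      obtain ⟨v, rfl⟩ := vert_cases G z
      have hd : (Subdiv G).dirac (mkV G w₀) (mkV G v) = (if v = w₀ then 1 else 0) := by
        unfold dirac
        by_cases hv : v = w₀
        · rw [if_pos (by rw [hv]), if_pos hv]
        · rw [if_neg (fun hc => hv (mkV_inj G hc)), if_neg hv]
      have h1 := hψ v
      have h2 : liftD G (Sum.elim D (fun _ => 0)) (mkV G v) = Sum.elim D (fun _ => 0) v := rfl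
      show 0 ≤ liftD G (Sum.elim D (fun _ => 0)) (mkV G v) - _ - _
      rw [hd, h2]
      omega
    · have heq : (liftD G (Sum.elim D (fun _ => 0)) - (Subdiv G).dirac (mkV G w₀)
          - fun z => liftD G (Sum.elim D (fun _ => 0)) z - (Subdiv G).dirac (mkV G w₀) z
            - (Subdiv G).ILap (liftD G ψ) z)
          = (Subdiv G).ILap (liftD G ψ) := by
        funext z
        show liftD G (Sum.elim D (fun _ => 0)) z - (Subdiv G).dirac (mkV G w₀) z - _ = _
        ring
      rw [heq, isPrincipal_iff]
      exact ⟨liftD G ψ, subdivDvb G _, rfl⟩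
  rcases w₀ with vstar | q
  · -- subdivision vertex is an old vertex
    obtain ⟨E₁, hE₁, hP₁⟩ := hcov (G.dirac vstar) (effective_dirac vstar) (degD_dirac vstar)
    obtain ⟨φ, hφ, hIL⟩ := (isPrincipal_iff _).mp hP₁
    have hval : ∀ v₀ : G.V, G.ILap φ v₀ = D v₀ - G.dirac vstar v₀ - E₁ v₀ := by
      intro v₀
      have := congrFun hIL v₀
      simpa using this
    refine ⟨extf G φ, ?_⟩
    intro v
    rcases v with v₀ | q'
    · rw [ILap_extf_old hφ v₀]
      have h2 := hE₁ v₀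
      have h3 : Sum.elim D (fun _ => 0) (Sum.inl v₀ : SubV G) = D v₀ := rfl
      rw [h3, hval v₀]
      have h4 : (if (Sum.inl v₀ : SubV G) = Sum.inl vstar then (1:ℤ) else 0)
          = G.dirac vstar v₀ := by
        unfold dirac
        by_cases hv : v₀ = vstar
        · rw [if_pos (by rw [hv]), if_pos hv]
        · rw [if_neg (by simpa using hv), if_neg hv]
      rw [h4]
      have h5 := effective_dirac (Γ := G) vstar v₀
      omega
    · obtain ⟨⟨e, j⟩, he, hj, hj', hord⟩ := q'
      have hrw : (Sum.inr (⟨(e, j), he, hj, hj', hord⟩ : IntVert G) : SubV G)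
          = Sum.inr (ivtx G e he j hj hj') := congrArg Sum.inr (ivtx_self _).symm
      rw [hrw, ILap_extf_int hφ he hj hj']
      simp
  · -- subdivision vertex is an interior vertex
    obtain ⟨⟨e, j⟩, he, hj, hj', hord⟩ := q
    have huu' : G.rv e ≠ G.rv (G.i e) := fun h => hloopless e he (congrArg Subtype.val h)
    obtain ⟨E₁, hE₁, hP₁⟩ := hcov (G.dirac (G.rv e)) (effective_dirac _) (degD_dirac _)
    obtain ⟨φ₁, hφ₁, hIL₁⟩ := (isPrincipal_iff _).mp hP₁
    obtain ⟨E₂, hE₂, hP₂⟩ := hcov (G.dirac (G.rv (G.i e))) (effective_dirac _) (degD_dirac _)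
    obtain ⟨φ₂, hφ₂, hIL₂⟩ := (isPrincipal_iff _).mp hP₂
    have hval₁ : ∀ v₀ : G.V, G.ILap φ₁ v₀ = D v₀ - G.dirac (G.rv e) v₀ - E₁ v₀ := by
      intro v₀; have := congrFun hIL₁ v₀; simpa using this
    have hval₂ : ∀ v₀ : G.V, G.ILap φ₂ v₀ = D v₀ - G.dirac (G.rv (G.i e)) v₀ - E₂ v₀ := by
      intro v₀; have := congrFun hIL₂ v₀; simpa using this
    have hwrw : (Sum.inr (⟨(e, j), he, hj, hj', hord⟩ : IntVert G) : SubV G)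
        = Sum.inr (ivtx G e he j hj hj') := congrArg Sum.inr (ivtx_self _).symm
    rw [hwrw]
    -- generic bounds at old vertices for a max of two shifted extensions
    have holdbound : ∀ (c₁ c₂ : ℤ) (v₀ : G.V),
        ((extf G φ₂ (Sum.inl v₀) + c₂ ≤ extf G φ₁ (Sum.inl v₀) + c₁) →
          (Subdiv G).ILap (liftD G (fun v => max (extf G φ₁ v + c₁) (extf G φ₂ v + c₂)))
              (mkV G (Sum.inl v₀)) ≤ D v₀ - G.dirac (G.rv e) v₀ - E₁ v₀)
        ∧ ((extf G φ₁ (Sum.inl v₀) + c₁ ≤ extf G φ₂ (Sum.inl v₀) + c₂) →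
          (Subdiv G).ILap (liftD G (fun v => max (extf G φ₁ v + c₁) (extf G φ₂ v + c₂)))
              (mkV G (Sum.inl v₀)) ≤ D v₀ - G.dirac (G.rv (G.i e)) v₀ - E₂ v₀) := by
      intro c₁ c₂ v₀
      constructor
      · intro hle
        have h1 := ILap_liftD_max_le' (fun v => max (extf G φ₁ v + c₁) (extf G φ₂ v + c₂))
          (fun v => extf G φ₁ v + c₁) (fun v => extf G φ₂ v + c₂) (fun u => rfl)
          (Sum.inl v₀) hle
        have h2 := ILap_liftD_shift (extf G φ₁) c₁ (Sum.inl v₀)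
        rw [h2, ILap_extf_old hφ₁ v₀, hval₁ v₀] at h1
        exact h1
      · intro hle
        have h1 := ILap_liftD_max_le' (fun v => max (extf G φ₁ v + c₁) (extf G φ₂ v + c₂))
          (fun v => extf G φ₂ v + c₂) (fun v => extf G φ₁ v + c₁)
          (fun u => max_comm _ _) (Sum.inl v₀) hle
        have h2 := ILap_liftD_shift (extf G φ₂) c₂ (Sum.inl v₀)
        rw [h2, ILap_extf_old hφ₂ v₀, hval₂ v₀] at h1
        exact h1
    -- comparing interior vertices
    have hvtx_iff : ∀ (e' : G.X) (he' : G.IsHalfEdge e') (j' : ℕ) (hj1 : 0 < j')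
        (hj2 : j' < G.l e') (hord' : ordx G e' ≤ ordx G (G.i e')),
        ivtx G e' he' j' hj1 hj2 = ivtx G e he j hj hj' ↔ (e' = e ∧ j' = j) := by
      intro e' he' j' hj1 hj2 hord'
      constructor
      · intro h
        have hh := congrArg Subtype.val h
        unfold ivtx at hh
        erw [dif_pos hord', dif_pos hord] at hh
        exact ⟨congrArg Prod.fst hh, congrArg Prod.snd hh⟩
      · rintro ⟨rfl, rfl⟩; rfl
    by_cases hs : G.dsl φ₁ e = G.dsl φ₂ e
    · -- parallel case: use max plus a trapezoid correction
      refine ⟨fun v => max (extf G φ₁ v + 0) (extf G φ₂ v + (φ₁ (G.rv e) - φ₂ (G.rv e)))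
        - tau G e j v, ?_⟩
      intro v
      have hsub := ILap_liftD_sub'
        (fun v => max (extf G φ₁ v + 0) (extf G φ₂ v + (φ₁ (G.rv e) - φ₂ (G.rv e)))
          - tau G e j v)
        (fun v => max (extf G φ₁ v + 0) (extf G φ₂ v + (φ₁ (G.rv e) - φ₂ (G.rv e))))
        (tau G e j) (fun u => rfl) v
      rw [hsub]
      rcases v with v₀ | q'
      · -- old vertices
        rw [ILap_tau_old he hord hj hj' v₀]
        have hrhs : Sum.elim D (fun _ => 0) (Sum.inl v₀ : SubV G) = D v₀ := rfl
        have hite : (if (Sum.inl v₀ : SubV G) = Sum.inr (ivtx G e he j hj hj') then (1:ℤ) else 0)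
            = 0 := by simp
        rw [hrhs, hite]
        by_cases hvu : v₀ = G.rv e
        · have hle : extf G φ₂ (Sum.inl v₀) + (φ₁ (G.rv e) - φ₂ (G.rv e))
              ≤ extf G φ₁ (Sum.inl v₀) + 0 := by
            show φ₂ v₀ + _ ≤ φ₁ v₀ + 0
            rw [hvu]
            omega
          have h1 := (holdbound 0 (φ₁ (G.rv e) - φ₂ (G.rv e)) v₀).1 hle
          have hd1 : G.dirac (G.rv e) v₀ = 1 := if_pos hvu
          have ht1 : (if G.rv e = v₀ then (-1:ℤ) else 0) = -1 := if_pos hvu.symm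
          have ht2 : (if G.rv (G.i e) = v₀ then (-1:ℤ) else 0) = 0 :=
            if_neg (fun hc => huu' (by rw [hvu] at hc; exact hc.symm))
          rw [ht1, ht2]
          rw [hd1] at h1
          have hE := hE₁ v₀
          linarith
        · by_cases hvu' : v₀ = G.rv (G.i e)
          · have hle : extf G φ₁ (Sum.inl v₀) + 0
                ≤ extf G φ₂ (Sum.inl v₀) + (φ₁ (G.rv e) - φ₂ (G.rv e)) := by
              show φ₁ v₀ + 0 ≤ φ₂ v₀ + _
              rw [hvu']
              have h1 := extf_rv_i hφ₁ he
              have h2 := extf_rv_i hφ₂ he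
              rw [hs] at h1
              linarith
            have h1 := (holdbound 0 (φ₁ (G.rv e) - φ₂ (G.rv e)) v₀).2 hle
            have hd1 : G.dirac (G.rv (G.i e)) v₀ = 1 := if_pos hvu'
            have ht1 : (if G.rv e = v₀ then (-1:ℤ) else 0) = 0 :=
              if_neg (fun hc => huu' (by rw [hvu'] at hc; exact hc))
            have ht2 : (if G.rv (G.i e) = v₀ then (-1:ℤ) else 0) = -1 := if_pos hvu'.symm
            rw [ht1, ht2]
            rw [hd1] at h1
            have hE := hE₂ v₀
            linarith
          · have ht1 : (if G.rv e = v₀ then (-1:ℤ) else 0) = 0 :=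
              if_neg (fun hc => hvu hc.symm)
            have ht2 : (if G.rv (G.i e) = v₀ then (-1:ℤ) else 0) = 0 :=
              if_neg (fun hc => hvu' hc.symm)
            rw [ht1, ht2]
            rcases le_total (extf G φ₂ (Sum.inl v₀) + (φ₁ (G.rv e) - φ₂ (G.rv e)))
              (extf G φ₁ (Sum.inl v₀) + 0) with hle | hle
            · have h1 := (holdbound 0 (φ₁ (G.rv e) - φ₂ (G.rv e)) v₀).1 hle
              have hd := effective_dirac (Γ := G) (G.rv e) v₀
              have hE := hE₁ v₀
              linarith
            · have h1 := (holdbound 0 (φ₁ (G.rv e) - φ₂ (G.rv e)) v₀).2 hle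
              have hd := effective_dirac (Γ := G) (G.rv (G.i e)) v₀
              have hE := hE₂ v₀
              linarith
      · -- interior vertices
        obtain ⟨⟨e', j'⟩, he', hj1, hj2, hord'⟩ := q'
        have hrw' : (Sum.inr (⟨(e', j'), he', hj1, hj2, hord'⟩ : IntVert G) : SubV G)
            = Sum.inr (ivtx G e' he' j' hj1 hj2) := congrArg Sum.inr (ivtx_self _).symm
        rw [hrw']
        have hrhs : Sum.elim D (fun _ => 0) (Sum.inr (ivtx G e' he' j' hj1 hj2) : SubV G)
            = 0 := rfl
        rw [hrhs]
        have hmax := ILap_max_int φ₁ φ₂ hφ₁ hφ₂ 0 (φ₁ (G.rv e) - φ₂ (G.rv e)) he' hj1 hj2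
        by_cases hee : e' = e
        · subst hee
          by_cases hjj : j' = j
          · subst hjj
            have hite : (if (Sum.inr (ivtx G e' he' j' hj1 hj2) : SubV G)
                = Sum.inr (ivtx G e' he j' hj hj') then (1:ℤ) else 0) = 1 := if_pos rfl
            rw [hite]
            have hAB : φ₁ (G.rv e') + 0 - (j' : ℤ) * G.dsl φ₁ e'
                = φ₂ (G.rv e') + (φ₁ (G.rv e') - φ₂ (G.rv e')) - (j' : ℤ) * G.dsl φ₂ e' := by
              rw [← hs]; ring
            rw [← hAB, ← hs] at hmax
            have hmax0 : (Subdiv G).ILap (liftD G (fun v => max (extf G φ₁ v + 0)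
                (extf G φ₂ v + (φ₁ (G.rv e') - φ₂ (G.rv e')))))
                (mkV G (Sum.inr (ivtx G e' he' j' hj1 hj2))) = 0 := by
              rw [hmax, max_self, max_self, max_self]; ring
            have hτ := ILap_tau_int_same he' hord hj hj' hj1 hj2
            have hpeak := tent_peak (j := (j' : ℤ)) (L := (G.l e' : ℤ))
              (by exact_mod_cast hj1) (by exact_mod_cast hj2)
            rw [hmax0, hτ]
            linarith
          · have hite : (if (Sum.inr (ivtx G e' he' j' hj1 hj2) : SubV G)
                = Sum.inr (ivtx G e' he j hj hj') then (1:ℤ) else 0) = 0 :=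
              if_neg (fun hc => hjj ((hvtx_iff e' he' j' hj1 hj2 hord').mp
                (Sum.inr.inj hc)).2)
            rw [hite]
            have hm0 : (Subdiv G).ILap (liftD G (fun v => max (extf G φ₁ v + 0)
                (extf G φ₂ v + (φ₁ (G.rv e') - φ₂ (G.rv e')))))
                (mkV G (Sum.inr (ivtx G e' he' j' hj1 hj2))) ≤ 0 := by
              rw [hmax]; exact maxexpr_le _ _ _ _
            have hτ := ILap_tau_int_same he' hord hj hj' hj1 hj2
            have hcc := tent_concave (min (j:ℤ) ((G.l e' : ℤ) - j)) (G.l e') (j' : ℤ)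
            rw [hτ]
            linarith
        · have h2' : e' ≠ G.i e := by
            intro hcur
            rw [hcur, G.i_invol] at hord'
            have heq := le_antisymm hord hord'
            exact he (ordx_inj G heq).symm
          have hite : (if (Sum.inr (ivtx G e' he' j' hj1 hj2) : SubV G)
              = Sum.inr (ivtx G e he j hj hj') then (1:ℤ) else 0) = 0 :=
            if_neg (fun hc => hee ((hvtx_iff e' he' j' hj1 hj2 hord').mp
              (Sum.inr.inj hc)).1)
          rw [hite]
          have hm0 : (Subdiv G).ILap (liftD G (fun v => max (extf G φ₁ v + 0)
              (extf G φ₂ v + (φ₁ (G.rv e) - φ₂ (G.rv e)))))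
              (mkV G (Sum.inr (ivtx G e' he' j' hj1 hj2))) ≤ 0 := by
            rw [hmax]; exact maxexpr_le _ _ _ _
          have hτ := ILap_tau_int_other he' hee h2' j hj1 hj2
          rw [hτ]
          linarith
    · -- crossing case: plain max with the crossing at the target vertex
      refine ⟨fun v => max (extf G φ₁ v + 0) (extf G φ₂ v
        + ((φ₁ (G.rv e) - (j:ℤ) * G.dsl φ₁ e) - (φ₂ (G.rv e) - (j:ℤ) * G.dsl φ₂ e))), ?_⟩
      intro v
      rcases v with v₀ | q'
      · have hrhs : Sum.elim D (fun _ => 0) (Sum.inl v₀ : SubV G) = D v₀ := rfl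
        have hite : (if (Sum.inl v₀ : SubV G) = Sum.inr (ivtx G e he j hj hj') then (1:ℤ) else 0)
            = 0 := by simp
        rw [hrhs, hite]
        rcases le_total (extf G φ₂ (Sum.inl v₀)
            + ((φ₁ (G.rv e) - (j:ℤ) * G.dsl φ₁ e) - (φ₂ (G.rv e) - (j:ℤ) * G.dsl φ₂ e)))
          (extf G φ₁ (Sum.inl v₀) + 0) with hle | hle
        · have h1 := (holdbound 0 _ v₀).1 hle
          have hd := effective_dirac (Γ := G) (G.rv e) v₀
          have hE := hE₁ v₀
          linarith
        · have h1 := (holdbound 0 _ v₀).2 hle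
          have hd := effective_dirac (Γ := G) (G.rv (G.i e)) v₀
          have hE := hE₂ v₀
          linarith
      · obtain ⟨⟨e', j'⟩, he', hj1, hj2, hord'⟩ := q'
        have hrw' : (Sum.inr (⟨(e', j'), he', hj1, hj2, hord'⟩ : IntVert G) : SubV G)
            = Sum.inr (ivtx G e' he' j' hj1 hj2) := congrArg Sum.inr (ivtx_self _).symm
        rw [hrw']
        have hrhs : Sum.elim D (fun _ => 0) (Sum.inr (ivtx G e' he' j' hj1 hj2) : SubV G)
            = 0 := rfl
        rw [hrhs]
        have hmax := ILap_max_int φ₁ φ₂ hφ₁ hφ₂ 0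
          ((φ₁ (G.rv e) - (j:ℤ) * G.dsl φ₁ e) - (φ₂ (G.rv e) - (j:ℤ) * G.dsl φ₂ e)) he' hj1 hj2
        by_cases hee : e' = e
        · subst hee
          by_cases hjj : j' = j
          · subst hjj
            have hite : (if (Sum.inr (ivtx G e' he' j' hj1 hj2) : SubV G)
                = Sum.inr (ivtx G e' he j' hj hj') then (1:ℤ) else 0) = 1 := if_pos rfl
            rw [hite]
            have hAB : φ₁ (G.rv e') + 0 - (j' : ℤ) * G.dsl φ₁ e'
                = φ₂ (G.rv e') + ((φ₁ (G.rv e') - (j':ℤ) * G.dsl φ₁ e')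
                  - (φ₂ (G.rv e') - (j':ℤ) * G.dsl φ₂ e')) - (j' : ℤ) * G.dsl φ₂ e' := by
              ring
            have hm1 : (Subdiv G).ILap (liftD G (fun v => max (extf G φ₁ v + 0)
                (extf G φ₂ v + ((φ₁ (G.rv e') - (j':ℤ) * G.dsl φ₁ e')
                  - (φ₂ (G.rv e') - (j':ℤ) * G.dsl φ₂ e')))))
                (mkV G (Sum.inr (ivtx G e' he' j' hj1 hj2))) ≤ -1 := by
              rw [hmax]; exact maxexpr_crossing hAB hs
            linarith
          · have hite : (if (Sum.inr (ivtx G e' he' j' hj1 hj2) : SubV G)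
                = Sum.inr (ivtx G e' he j hj hj') then (1:ℤ) else 0) = 0 :=
              if_neg (fun hc => hjj ((hvtx_iff e' he' j' hj1 hj2 hord').mp
                (Sum.inr.inj hc)).2)
            rw [hite]
            have hm0 : (Subdiv G).ILap (liftD G (fun v => max (extf G φ₁ v + 0)
                (extf G φ₂ v + ((φ₁ (G.rv e') - (j:ℤ) * G.dsl φ₁ e')
                  - (φ₂ (G.rv e') - (j:ℤ) * G.dsl φ₂ e')))))
                (mkV G (Sum.inr (ivtx G e' he' j' hj1 hj2))) ≤ 0 := by
              rw [hmax]; exact maxexpr_le _ _ _ _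
            linarith
        · have hite : (if (Sum.inr (ivtx G e' he' j' hj1 hj2) : SubV G)
              = Sum.inr (ivtx G e he j hj hj') then (1:ℤ) else 0) = 0 :=
            if_neg (fun hc => hee ((hvtx_iff e' he' j' hj1 hj2 hord').mp
              (Sum.inr.inj hc)).1)
          rw [hite]
          have hm0 : (Subdiv G).ILap (liftD G (fun v => max (extf G φ₁ v + 0)
              (extf G φ₂ v + ((φ₁ (G.rv e) - (j:ℤ) * G.dsl φ₁ e)
                - (φ₂ (G.rv e) - (j:ℤ) * G.dsl φ₂ e)))))
              (mkV G (Sum.inr (ivtx G e' he' j' hj1 hj2))) ≤ 0 := by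
            rw [hmax]; exact maxexpr_le _ _ _ _
          linarith

end MGraph


/-- **Lemma 4.13.** Let `Γ` be an `ℕ`-metrised graph without loops, and let `G` be the
underlying graph. Let `H` be the graph obtained from `G` by subdividing every edge
`{e, i e}` exactly `l e - 1` times, regarded as an `ℕ`-metrised graph in which every edge
has length `1`. Then `dgon(Γ) ≥ dgon(H)`. -/
theorem MGraph.dgon_subdiv_le (G : MGraph ℕ) (hconn : G.IsConnected)
    (hloopless : ∀ x, G.IsHalfEdge x → G.r x ≠ G.r (G.i x)) :
    (MGraph.Subdiv G).dgon ≤ G.dgon := by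
  have hneV : Nonempty G.V := ⟨G.rv (Classical.choice hconn.1)⟩
  have hneV' : Nonempty (MGraph.Subdiv G).V := ⟨MGraph.mkV G (Sum.inl (Classical.choice hneV))⟩
  unfold MGraph.dgon
  have hsub : {d : ℤ | ∃ D : G.V → ℤ, 1 ≤ G.rank D ∧ G.degD D = d}
      ⊆ {d : ℤ | ∃ D : (MGraph.Subdiv G).V → ℤ,
          1 ≤ (MGraph.Subdiv G).rank D ∧ (MGraph.Subdiv G).degD D = d} := by
    rintro d ⟨D, hr, hdeg⟩
    refine ⟨MGraph.liftD G (Sum.elim D (fun _ => 0)), ?_, ?_⟩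
    · rw [MGraph.rank_ge_one_iff hneV']
      exact MGraph.covers_subdiv G hloopless D ((MGraph.rank_ge_one_iff hneV D).mp hr)
    · rw [MGraph.degD_liftD]
      exact hdeg
  have hne₁ : {d : ℤ | ∃ D : G.V → ℤ, 1 ≤ G.rank D ∧ G.degD D = d}.Nonempty := by
    refine ⟨G.degD (fun _ => 1), (fun _ => 1), ?_, rfl⟩
    rw [MGraph.rank_ge_one_iff hneV]
    intro F hF hdF
    obtain ⟨w, rfl⟩ := MGraph.eff_deg_one hF hdF
    refine ⟨fun v => 1 - G.dirac w v, ?_, ?_⟩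
    · intro v
      have h1 := MGraph.effective_dirac (Γ := G) w v
      have h2 : G.dirac w v ≤ 1 := by unfold MGraph.dirac; split <;> omega
      show 0 ≤ 1 - G.dirac w v
      omega
    · have heq : ((fun _ => (1:ℤ)) - G.dirac w - fun v => 1 - G.dirac w v)
          = (fun _ => (0:ℤ)) := by
        funext v
        show (1:ℤ) - G.dirac w v - (1 - G.dirac w v) = 0
        ring
      rw [heq]
      exact MGraph.isPrincipal_zero G
  have hbdd₂ : BddBelow {d : ℤ | ∃ D : (MGraph.Subdiv G).V → ℤ,
      1 ≤ (MGraph.Subdiv G).rank D ∧ (MGraph.Subdiv G).degD D = d} := by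
    refine ⟨0, ?_⟩
    rintro d ⟨D, hr, hdeg⟩
    have hcov := (MGraph.rank_ge_one_iff hneV' D).mp hr
    obtain ⟨w₀⟩ := hneV'
    obtain ⟨E, hE, hP⟩ := hcov ((MGraph.Subdiv G).dirac w₀)
      (MGraph.effective_dirac w₀) (MGraph.degD_dirac w₀)
    obtain ⟨φ, hφ, hIL⟩ := (MGraph.isPrincipal_iff _).mp hP
    have hdeg0 : (MGraph.Subdiv G).degD (D - (MGraph.Subdiv G).dirac w₀ - E) = 0 := by
      rw [← hIL]; exact MGraph.degD_ILap hφ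
    rw [MGraph.degD_sub_s18, MGraph.degD_sub_s18, MGraph.degD_dirac] at hdeg0
    have h1 := MGraph.degD_nonneg_s18 hE
    omega
  exact csInf_le_csInf hbdd₂ hne₁ hsub

end
end
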